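/- arXiv:1904.10848 — 4 statements merged into one kernel-verified Lean document; each statement's English description precedes it below -/
import Mathlib

section
/- Let V₈ be an 8-dimensional complex vector space and let U₄ ⊆ U₆ ⊆ V₈ be subspaces with dim U₄ = 4 and dim U₆ = 6. Then for every y ∈ ⋀²U₄∧V₈ + ⋀³U₆ ⊆ ⋀³V₈ there exist subspaces V₂ ⊆ V₅ of V₈ with dim V₂ = 2, dim V₅ = 5, V₂ ⊆ U₄ ⊆ V₅ ⊆ U₆, and y ∈ ⋀³V₅ + V₂∧V₅∧V₈. -/
open ExteriorAlgebra

noncomputable section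

variable {V : Type*} [AddCommGroup V] [Module ℂ V]

/-- For subspaces `S, T, U` of a complex vector space `W`, the subspace `S∧T∧U` of `⋀³W`,
realized as the span, inside the exterior algebra, of all products `s∧t∧u` with
`s ∈ S`, `t ∈ T`, `u ∈ U`. In particular `wSpan S S ⊤ = ⋀²S∧W` and `wSpan S S S = ⋀³S`. -/
def wSpan (S T U : Submodule ℂ V) : Submodule ℂ (ExteriorAlgebra ℂ V) :=
  Submodule.span ℂ {x | ∃ s ∈ S, ∃ t ∈ T, ∃ u ∈ U, x = ι ℂ s * ι ℂ t * ι ℂ u}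

/-- span of wedge products of two vectors -/
def sq2 (S T : Submodule ℂ V) : Submodule ℂ (ExteriorAlgebra ℂ V) :=
  Submodule.span ℂ {x | ∃ s ∈ S, ∃ t ∈ T, x = ι ℂ s * ι ℂ t}

namespace wSpanAux



lemma mem_wSpan {S T U : Submodule ℂ V} {s t u : V} (hs : s ∈ S) (ht : t ∈ T) (hu : u ∈ U) :
    ι ℂ s * ι ℂ t * ι ℂ u ∈ wSpan S T U :=
  Submodule.subset_span ⟨s, hs, t, ht, u, hu, rfl⟩

lemma wSpan_mono {S S' T T' U U' : Submodule ℂ V} (h1 : S ≤ S') (h2 : T ≤ T') (h3 : U ≤ U') :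
    wSpan S T U ≤ wSpan S' T' U' := by
  apply Submodule.span_mono
  rintro x ⟨s, hs, t, ht, u, hu, rfl⟩
  exact ⟨s, h1 hs, t, h2 ht, u, h3 hu, rfl⟩

lemma ι_anticomm (x y : V) : ι ℂ (M := V) x * ι ℂ y = -(ι ℂ y * ι ℂ x) :=
  eq_neg_of_add_eq_zero_left (ι_add_mul_swap x y)

lemma wSpan_comm12 (S T U : Submodule ℂ V) : wSpan S T U = wSpan T S U := by
  have key : ∀ A B C : Submodule ℂ V, wSpan A B C ≤ wSpan B A C := by
    intro A B C
    rw [wSpan, Submodule.span_le]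
    rintro x ⟨s, hs, t, ht, u, hu, rfl⟩
    have : ι ℂ s * ι ℂ t * ι ℂ u = (-1 : ℂ) • (ι ℂ t * ι ℂ s * ι ℂ u) := by
      rw [ι_anticomm s t]; simp
    rw [this]
    exact Submodule.smul_mem _ _ (mem_wSpan ht hs hu)
  exact le_antisymm (key S T U) (key T S U)

lemma wSpan_comm23 (S T U : Submodule ℂ V) : wSpan S T U = wSpan S U T := by
  have key : ∀ A B C : Submodule ℂ V, wSpan A B C ≤ wSpan A C B := by
    intro A B C
    rw [wSpan, Submodule.span_le]
    rintro x ⟨s, hs, t, ht, u, hu, rfl⟩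
    have : ι ℂ s * ι ℂ t * ι ℂ u = (-1 : ℂ) • (ι ℂ s * ι ℂ u * ι ℂ t) := by
      rw [mul_assoc, mul_assoc, ι_anticomm t u]; simp
    rw [this]
    exact Submodule.smul_mem _ _ (mem_wSpan hs hu ht)
  exact le_antisymm (key S T U) (key S U T)

lemma wSpan_comm13 (S T U : Submodule ℂ V) : wSpan S T U = wSpan U T S := by
  rw [wSpan_comm12, wSpan_comm23, wSpan_comm12]

/-- splitting a sup in slot 1 -/
lemma wSpan_sup1 (S₁ S₂ T U : Submodule ℂ V) :
    wSpan (S₁ ⊔ S₂) T U ≤ wSpan S₁ T U ⊔ wSpan S₂ T U := by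
  rw [wSpan, Submodule.span_le]
  rintro x ⟨s, hs, t, ht, u, hu, rfl⟩
  rcases Submodule.mem_sup.1 hs with ⟨s₁, h₁, s₂, h₂, rfl⟩
  have : ι ℂ (s₁ + s₂) * ι ℂ t * ι ℂ u
      = ι ℂ s₁ * ι ℂ t * ι ℂ u + ι ℂ s₂ * ι ℂ t * ι ℂ u := by
    rw [map_add, add_mul, add_mul]
  rw [this]
  exact Submodule.add_mem _ (Submodule.mem_sup_left (mem_wSpan h₁ ht hu))
    (Submodule.mem_sup_right (mem_wSpan h₂ ht hu))

lemma wSpan_sup2 (S T₁ T₂ U : Submodule ℂ V) :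
    wSpan S (T₁ ⊔ T₂) U ≤ wSpan S T₁ U ⊔ wSpan S T₂ U := by
  rw [wSpan_comm12, wSpan_comm12 S T₁, wSpan_comm12 S T₂]
  exact wSpan_sup1 _ _ _ _

lemma wSpan_sup3 (S T U₁ U₂ : Submodule ℂ V) :
    wSpan S T (U₁ ⊔ U₂) ≤ wSpan S T U₁ ⊔ wSpan S T U₂ := by
  rw [wSpan_comm13, wSpan_comm13 S T U₁, wSpan_comm13 S T U₂]
  exact wSpan_sup1 _ _ _ _

lemma wSpan_diag12 (a : V) (U : Submodule ℂ V) :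
    wSpan (Submodule.span ℂ {a}) (Submodule.span ℂ {a}) U = ⊥ := by
  rw [wSpan, Submodule.span_eq_bot]
  rintro x ⟨s, hs, t, ht, u, hu, rfl⟩
  rcases Submodule.mem_span_singleton.1 hs with ⟨p, rfl⟩
  rcases Submodule.mem_span_singleton.1 ht with ⟨q, rfl⟩
  simp only [map_smul]
  rw [smul_mul_assoc, mul_smul_comm, smul_mul_assoc, smul_mul_assoc, ι_sq_zero]
  simp

lemma wSpan_diag23 (a : V) (S : Submodule ℂ V) :
    wSpan S (Submodule.span ℂ {a}) (Submodule.span ℂ {a}) = ⊥ := by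
  rw [wSpan_comm13, wSpan_diag12]

lemma wSpan_diag13 (a : V) (S : Submodule ℂ V) :
    wSpan (Submodule.span ℂ {a}) S (Submodule.span ℂ {a}) = ⊥ := by
  rw [wSpan_comm23, wSpan_diag12]

lemma wSpan_triple (a b c : V) :
    wSpan (Submodule.span ℂ {a}) (Submodule.span ℂ {b}) (Submodule.span ℂ {c})
      = Submodule.span ℂ {ι ℂ a * ι ℂ b * ι ℂ c} := by
  apply le_antisymm
  · rw [wSpan, Submodule.span_le]
    rintro x ⟨s, hs, t, ht, u, hu, rfl⟩
    rcases Submodule.mem_span_singleton.1 hs with ⟨p, rfl⟩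
    rcases Submodule.mem_span_singleton.1 ht with ⟨q, rfl⟩
    rcases Submodule.mem_span_singleton.1 hu with ⟨r, rfl⟩
    simp only [map_smul, smul_mul_assoc, mul_smul_comm]
    exact Submodule.smul_mem _ _ (Submodule.smul_mem _ _ (Submodule.smul_mem _ _
      (Submodule.mem_span_singleton_self _)))
  · rw [Submodule.span_le, Set.singleton_subset_iff]
    exact mem_wSpan (Submodule.mem_span_singleton_self a)
      (Submodule.mem_span_singleton_self b) (Submodule.mem_span_singleton_self c)





lemma mem_sq2 {S T : Submodule ℂ V} {s t : V} (hs : s ∈ S) (ht : t ∈ T) :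
    ι ℂ s * ι ℂ t ∈ sq2 S T :=
  Submodule.subset_span ⟨s, hs, t, ht, rfl⟩

lemma sq2_sup1 (S₁ S₂ T : Submodule ℂ V) :
    sq2 (S₁ ⊔ S₂) T ≤ sq2 S₁ T ⊔ sq2 S₂ T := by
  rw [sq2, Submodule.span_le]
  rintro x ⟨s, hs, t, ht, rfl⟩
  rcases Submodule.mem_sup.1 hs with ⟨s₁, h₁, s₂, h₂, rfl⟩
  rw [map_add, add_mul]
  exact Submodule.add_mem _ (Submodule.mem_sup_left (mem_sq2 h₁ ht))
    (Submodule.mem_sup_right (mem_sq2 h₂ ht))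

lemma ι_anticomm' (x y : V) : ι ℂ (M := V) x * ι ℂ y = -(ι ℂ y * ι ℂ x) :=
  eq_neg_of_add_eq_zero_left (ι_add_mul_swap x y)

lemma sq2_comm (S T : Submodule ℂ V) : sq2 S T = sq2 T S := by
  have key : ∀ A B : Submodule ℂ V, sq2 A B ≤ sq2 B A := by
    intro A B
    rw [sq2, Submodule.span_le]
    rintro x ⟨s, hs, t, ht, rfl⟩
    rw [ι_anticomm']
    exact Submodule.neg_mem _ (mem_sq2 ht hs)
  exact le_antisymm (key S T) (key T S)

lemma sq2_sup2 (S T₁ T₂ : Submodule ℂ V) :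
    sq2 S (T₁ ⊔ T₂) ≤ sq2 S T₁ ⊔ sq2 S T₂ := by
  rw [sq2_comm, sq2_comm S T₁, sq2_comm S T₂]; exact sq2_sup1 _ _ _

lemma sq2_diag (a : V) : sq2 (Submodule.span ℂ {a}) (Submodule.span ℂ {a}) = ⊥ := by
  rw [sq2, Submodule.span_eq_bot]
  rintro x ⟨s, hs, t, ht, rfl⟩
  rcases Submodule.mem_span_singleton.1 hs with ⟨p, rfl⟩
  rcases Submodule.mem_span_singleton.1 ht with ⟨q, rfl⟩
  simp only [map_smul, smul_mul_assoc, mul_smul_comm, ι_sq_zero, smul_zero]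

lemma sq2_pair (a b : V) :
    sq2 (Submodule.span ℂ {a}) (Submodule.span ℂ {b})
      = Submodule.span ℂ {ι ℂ a * ι ℂ b} := by
  apply le_antisymm
  · rw [sq2, Submodule.span_le]
    rintro x ⟨s, hs, t, ht, rfl⟩
    rcases Submodule.mem_span_singleton.1 hs with ⟨p, rfl⟩
    rcases Submodule.mem_span_singleton.1 ht with ⟨q, rfl⟩
    simp only [map_smul, smul_mul_assoc, mul_smul_comm]
    exact Submodule.smul_mem _ _ (Submodule.smul_mem _ _ (Submodule.mem_span_singleton_self _))
  · rw [Submodule.span_le, Set.singleton_subset_iff]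
    exact mem_sq2 (Submodule.mem_span_singleton_self a) (Submodule.mem_span_singleton_self b)

/-- multiplying an element of sq2 by `ι w` lands in wSpan -/
lemma sq2_mul_mem {C D W : Submodule ℂ V} {β : ExteriorAlgebra ℂ V} (hβ : β ∈ sq2 C D)
    {w : V} (hw : w ∈ W) : β * ι ℂ w ∈ wSpan C D W := by
  induction hβ using Submodule.span_induction with
  | mem x hx => rcases hx with ⟨s, hs, t, ht, rfl⟩; exact mem_wSpan hs ht hw
  | zero => rw [zero_mul]; exact Submodule.zero_mem _
  | add x y _ _ hx hy => rw [add_mul]; exact Submodule.add_mem _ hx hy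
  | smul c x _ hx => rw [smul_mul_assoc]; exact Submodule.smul_mem _ _ hx

/-- extraction: an element of `wSpan C D ⟨e⟩` is `β * ι e` with `β ∈ sq2 C D`. -/
lemma wSpan_singleton3 {C D : Submodule ℂ V} (e : V) {x : ExteriorAlgebra ℂ V}
    (hx : x ∈ wSpan C D (Submodule.span ℂ {e})) :
    ∃ β ∈ sq2 C D, x = β * ι ℂ e := by
  have hle : wSpan C D (Submodule.span ℂ {e})
      ≤ Submodule.map (LinearMap.mulRight ℂ (ι ℂ e)) (sq2 C D) := by
    rw [wSpan, Submodule.span_le]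
    rintro z ⟨s, hs, t, ht, u, hu, rfl⟩
    rcases Submodule.mem_span_singleton.1 hu with ⟨r, rfl⟩
    refine ⟨r • (ι ℂ s * ι ℂ t), Submodule.smul_mem _ _ (mem_sq2 hs ht), ?_⟩
    simp only [LinearMap.mulRight_apply, map_smul, smul_mul_assoc, mul_smul_comm]
  rcases hle hx with ⟨β, hβ, h⟩
  exact ⟨β, hβ, h.symm⟩

/-- extraction: element of `wSpan S ⟨a⟩ ⟨b⟩` is `ι u * ι a * ι b` with `u ∈ S`. -/
lemma wSpan_singleton23 {S : Submodule ℂ V} (a b : V) {x : ExteriorAlgebra ℂ V}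
    (hx : x ∈ wSpan S (Submodule.span ℂ {a}) (Submodule.span ℂ {b})) :
    ∃ u ∈ S, x = ι ℂ u * ι ℂ a * ι ℂ b := by
  have hle : wSpan S (Submodule.span ℂ {a}) (Submodule.span ℂ {b})
      ≤ Submodule.map ((LinearMap.mulRight ℂ (ι ℂ a * ι ℂ b)).comp (ι ℂ)) S := by
    rw [wSpan, Submodule.span_le]
    rintro z ⟨s, hs, t, ht, u, hu, rfl⟩
    rcases Submodule.mem_span_singleton.1 ht with ⟨p, rfl⟩
    rcases Submodule.mem_span_singleton.1 hu with ⟨q, rfl⟩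
    refine ⟨(p * q) • s, Submodule.smul_mem _ _ hs, ?_⟩
    simp only [LinearMap.comp_apply, LinearMap.mulRight_apply, map_smul, smul_mul_assoc,
      mul_smul_comm, mul_assoc, smul_smul, mul_comm p q]
  rcases hle hx with ⟨u, hu, h⟩
  refine ⟨u, hu, ?_⟩
  rw [← h]
  simp [mul_assoc]





lemma ι_triple_ne_zero {v : Fin 3 → V} (hv : LinearIndependent ℂ v) :
    ι ℂ (v 0) * ι ℂ (v 1) * ι ℂ (v 2) ≠ 0 := by
  classical
  have hs : LinearIndepOn ℂ id (Set.range v) := hv.linearIndepOn_id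
  let B := Module.Basis.extend hs
  have hsub : Set.range v ⊆ hs.extend (Set.subset_univ _) := Module.Basis.subset_extend hs
  let σ : Fin 3 → hs.extend (Set.subset_univ _) := fun i => ⟨v i, hsub ⟨i, rfl⟩⟩
  have hσB : ∀ i, B (σ i) = v i := fun i => Module.Basis.extend_apply_self hs _
  have hσinj : Function.Injective σ := by
    intro i j h
    exact hv.injective (by simpa [σ] using congrArg Subtype.val h)
  let L : V →ₗ[ℂ] (Fin 3 → ℂ) := LinearMap.pi (fun i => B.coord (σ i))
  let φ : V [⋀^Fin 3]→ₗ[ℂ] ℂ := (Matrix.detRowAlternating).compLinearMap L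
  have hφ : φ v = 1 := by
    have hM : (Matrix.of fun i j => L (v i) j) = (1 : Matrix (Fin 3) (Fin 3) ℂ) := by
      funext i j
      simp only [Matrix.of_apply]
      simp only [L, LinearMap.pi_apply, Module.Basis.coord_apply, ← hσB i, B.repr_self,
        Finsupp.single_apply]
      by_cases h : i = j
      · subst h; simp [Matrix.one_apply]
      · have : σ i ≠ σ j := fun hc => h (hσinj hc)
        simp [Matrix.one_apply, h, this]
    have : φ v = Matrix.det (Matrix.of fun i j => L (v i) j) := rfl
    rw [this, hM, Matrix.det_one]
  let f : ∀ i : ℕ, V [⋀^Fin i]→ₗ[ℂ] ℂ := fun i => if h : i = 3 then h ▸ φ else 0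
  have hf3 : f 3 = φ := by simp [f]
  have key : liftAlternating f (ι ℂ (v 0) * ι ℂ (v 1) * ι ℂ (v 2)) = 1 := by
    rw [mul_assoc, liftAlternating_ι_mul, liftAlternating_ι_mul, liftAlternating_ι]
    show (((f 3).curryLeft (v 0)).curryLeft (v 1)) ![v 2] = 1
    rw [hf3]
    have : (Matrix.vecCons (v 0) (Matrix.vecCons (v 1) ![v 2])) = v := by
      funext i; fin_cases i <;> rfl
    show φ (Matrix.vecCons (v 0) (Matrix.vecCons (v 1) ![v 2])) = 1
    rw [this, hφ]
  intro h
  rw [h, map_zero] at key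
  exact one_ne_zero key.symm

lemma exists_compl_in (S W : Submodule ℂ V) (hSW : S ≤ W) [FiniteDimensional ℂ W] :
    ∃ E : Submodule ℂ V, E ≤ W ∧ S ⊔ E = W ∧ S ⊓ E = ⊥ ∧
      Module.finrank ℂ S + Module.finrank ℂ E = Module.finrank ℂ W := by
  obtain ⟨q, hq⟩ := Submodule.exists_isCompl (S.comap W.subtype)
  refine ⟨q.map W.subtype, Submodule.map_subtype_le _ _, ?_, ?_, ?_⟩
  · have h1 : (S.comap W.subtype).map W.subtype = S := by
      rw [Submodule.map_comap_subtype, inf_eq_right.2 hSW]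
    rw [← h1, ← Submodule.map_sup, hq.sup_eq_top, Submodule.map_subtype_top]
  · have h1 : (S.comap W.subtype).map W.subtype = S := by
      rw [Submodule.map_comap_subtype, inf_eq_right.2 hSW]
    rw [← h1, ← Submodule.map_inf _ (Submodule.injective_subtype W), hq.inf_eq_bot,
      Submodule.map_bot]
  · have e1 : Module.finrank ℂ (S.comap W.subtype) + Module.finrank ℂ q
        = Module.finrank ℂ W := by
      rw [← Submodule.finrank_sup_add_finrank_inf_eq, hq.sup_eq_top, hq.inf_eq_bot]
      simp
    have e2 : Module.finrank ℂ ((S.comap W.subtype).map W.subtype)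
        = Module.finrank ℂ (S.comap W.subtype) :=
      Submodule.finrank_map_subtype_eq _ _
    have h1 : (S.comap W.subtype).map W.subtype = S := by
      rw [Submodule.map_comap_subtype, inf_eq_right.2 hSW]
    rw [h1] at e2
    have e3 : Module.finrank ℂ (q.map W.subtype) = Module.finrank ℂ q :=
      Submodule.finrank_map_subtype_eq _ _
    rw [e2, e3]; exact e1

lemma exists_fin_span (W : Submodule ℂ V) [FiniteDimensional ℂ W] (n : ℕ)
    (h : Module.finrank ℂ W = n) :
    ∃ g : Fin n → V, (∀ i, g i ∈ W) ∧ LinearIndependent ℂ g ∧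
      Submodule.span ℂ (Set.range g) = W := by
  let b : Module.Basis (Fin n) ℂ W := (Module.finBasis ℂ W).reindex (finCongr h)
  refine ⟨fun i => ↑(b i), fun i => (b i).2, ?_, ?_⟩
  · have := b.linearIndependent.map' W.subtype (Submodule.ker_subtype W)
    exact this
  · have : Set.range (fun i => (W.subtype (b i))) = W.subtype '' Set.range b := by
      rw [← Set.range_comp]; rfl
    show Submodule.span ℂ (Set.range fun i => W.subtype (b i)) = W
    rw [this, ← Submodule.map_span, b.span_eq, Submodule.map_subtype_top]

lemma sw12 (x y z : V) : ι ℂ (M := V) x * ι ℂ y * ι ℂ z = -(ι ℂ y * ι ℂ x * ι ℂ z) := by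
  rw [ι_anticomm' x y, neg_mul]

lemma sw23 (x y z : V) : ι ℂ (M := V) x * ι ℂ y * ι ℂ z = -(ι ℂ x * ι ℂ z * ι ℂ y) := by
  rw [mul_assoc, mul_assoc, ι_anticomm' y z, mul_neg]

lemma sw13 (x y z : V) : ι ℂ (M := V) x * ι ℂ y * ι ℂ z = -(ι ℂ z * ι ℂ y * ι ℂ x) := by
  rw [sw12 x y z, sw23 y x z, sw12 y z x, neg_neg]

lemma wSpan_sup1_le {A B T U : Submodule ℂ V} {R : Submodule ℂ (ExteriorAlgebra ℂ V)}
    (h1 : wSpan A T U ≤ R) (h2 : wSpan B T U ≤ R) : wSpan (A ⊔ B) T U ≤ R :=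
  le_trans (wSpan_sup1 _ _ _ _) (sup_le h1 h2)

lemma wSpan_sup2_le {A T₁ T₂ U : Submodule ℂ V} {R : Submodule ℂ (ExteriorAlgebra ℂ V)}
    (h1 : wSpan A T₁ U ≤ R) (h2 : wSpan A T₂ U ≤ R) : wSpan A (T₁ ⊔ T₂) U ≤ R :=
  le_trans (wSpan_sup2 _ _ _ _) (sup_le h1 h2)

lemma wSpan_sup3_le {A T U₁ U₂ : Submodule ℂ V} {R : Submodule ℂ (ExteriorAlgebra ℂ V)}
    (h1 : wSpan A T U₁ ≤ R) (h2 : wSpan A T U₂ ≤ R) : wSpan A T (U₁ ⊔ U₂) ≤ R :=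
  le_trans (wSpan_sup3 _ _ _ _) (sup_le h1 h2)

lemma sq2_sup1_le {A B T : Submodule ℂ V} {R : Submodule ℂ (ExteriorAlgebra ℂ V)}
    (h1 : sq2 A T ≤ R) (h2 : sq2 B T ≤ R) : sq2 (A ⊔ B) T ≤ R :=
  le_trans (sq2_sup1 _ _ _) (sup_le h1 h2)

lemma sq2_sup2_le {A T₁ T₂ : Submodule ℂ V} {R : Submodule ℂ (ExteriorAlgebra ℂ V)}
    (h1 : sq2 A T₁ ≤ R) (h2 : sq2 A T₂ ≤ R) : sq2 A (T₁ ⊔ T₂) ≤ R :=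
  le_trans (sq2_sup2 _ _ _) (sup_le h1 h2)

/-- ⋀³ of a 3-dim space is spanned by the single triple product. -/
lemma cube_le (g0 g1 g2 : V) (C : Submodule ℂ V)
    (hC : C = Submodule.span ℂ {g0} ⊔ Submodule.span ℂ {g1} ⊔ Submodule.span ℂ {g2}) :
    wSpan C C C ≤ Submodule.span ℂ {ι ℂ g0 * ι ℂ g1 * ι ℂ g2} := by
  rw [hC]
  refine wSpan_sup1_le (wSpan_sup1_le ?_ ?_) ?_
  all_goals refine wSpan_sup2_le (wSpan_sup2_le ?_ ?_) ?_
  all_goals refine wSpan_sup3_le (wSpan_sup3_le ?_ ?_) ?_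
  all_goals
    first
    | (rw [wSpan_diag12]; exact bot_le)
    | (rw [wSpan_diag13]; exact bot_le)
    | (rw [wSpan_diag23]; exact bot_le)
    | (rw [wSpan_triple, Submodule.span_singleton_le_iff_mem]
       first
       | exact Submodule.mem_span_singleton_self _
       | exact Submodule.mem_span_singleton.2 ⟨-1, by rw [neg_one_smul, sw23 g0 g2 g1]⟩
       | exact Submodule.mem_span_singleton.2 ⟨-1, by rw [neg_one_smul, sw12 g1 g0 g2]⟩
       | exact Submodule.mem_span_singleton.2 ⟨-1, by rw [neg_one_smul, sw13 g2 g1 g0]⟩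
       | exact Submodule.mem_span_singleton.2
           ⟨1, by rw [one_smul, sw12 g1 g2 g0, sw13 g2 g1 g0, neg_neg]⟩
       | exact Submodule.mem_span_singleton.2
           ⟨1, by rw [one_smul, sw13 g2 g0 g1, sw12 g1 g0 g2, neg_neg]⟩)

/-- ⋀² of a 3-dim space is spanned by three products. -/
lemma sq2_le (g0 g1 g2 : V) (C : Submodule ℂ V)
    (hC : C = Submodule.span ℂ {g0} ⊔ Submodule.span ℂ {g1} ⊔ Submodule.span ℂ {g2}) :
    sq2 C C ≤ Submodule.span ℂ
      {ι ℂ g0 * ι ℂ g1, ι ℂ g0 * ι ℂ g2, ι ℂ g1 * ι ℂ g2} := by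
  rw [hC]
  refine sq2_sup1_le (sq2_sup1_le ?_ ?_) ?_
  all_goals refine sq2_sup2_le (sq2_sup2_le ?_ ?_) ?_
  all_goals
    first
    | (rw [sq2_diag]; exact bot_le)
    | (rw [sq2_pair, Submodule.span_singleton_le_iff_mem]
       first
       | (apply Submodule.subset_span; simp; done)
       | (rw [ι_anticomm' g1 g0]; apply Submodule.neg_mem; apply Submodule.subset_span; simp;
          done)
       | (rw [ι_anticomm' g2 g0]; apply Submodule.neg_mem; apply Submodule.subset_span; simp;
          done)
       | (rw [ι_anticomm' g2 g1]; apply Submodule.neg_mem; apply Submodule.subset_span; simp;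
          done))

lemma mul_self_cancel (a b : V) : ι ℂ (M := V) a * ι ℂ b * ι ℂ a = 0 := by
  rw [mul_assoc, ι_anticomm' b a, mul_neg, ← mul_assoc, ι_sq_zero, zero_mul, neg_zero]

/-- key lemma: a 2-vector on a 3-dim space annihilated by `x` is divisible by `x`. -/
lemma divisible (x d1 d2 : V) (C : Submodule ℂ V)
    (hC : C = Submodule.span ℂ {x} ⊔ Submodule.span ℂ {d1} ⊔ Submodule.span ℂ {d2})
    (hind : LinearIndependent ℂ ![x, d1, d2])
    {β : ExteriorAlgebra ℂ V} (hβ : β ∈ sq2 C C) (h0 : β * ι ℂ x = 0) :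
    β ∈ Submodule.span ℂ {ι ℂ x * ι ℂ d1, ι ℂ x * ι ℂ d2} := by
  have h1 := sq2_le x d1 d2 C hC hβ
  rw [Submodule.mem_span_insert] at h1
  obtain ⟨p, z, hz, rfl⟩ := h1
  rw [Submodule.mem_span_insert] at hz
  obtain ⟨q, z', hz', rfl⟩ := hz
  rw [Submodule.mem_span_singleton] at hz'
  obtain ⟨r, rfl⟩ := hz'
  have hPne : ι ℂ (M := V) d1 * ι ℂ d2 * ι ℂ x ≠ 0 := by
    have h := ι_triple_ne_zero hind
    simp only [Matrix.cons_val_zero, Matrix.cons_val_one, Matrix.head_cons, Matrix.cons_val_two,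
      Matrix.tail_cons] at h
    have hcyc : ι ℂ (M := V) d1 * ι ℂ d2 * ι ℂ x = ι ℂ x * ι ℂ d1 * ι ℂ d2 := by
      rw [sw13 d1 d2 x, sw23 x d2 d1, neg_neg]
    rw [hcyc]
    convert h using 3 <;> norm_num
  have hr : r = 0 := by
    rw [add_mul, add_mul, smul_mul_assoc, smul_mul_assoc, smul_mul_assoc,
      mul_self_cancel, mul_self_cancel, smul_zero, smul_zero, zero_add, zero_add] at h0
    rcases smul_eq_zero.1 h0 with h | h
    · exact h
    · exact absurd h hPne
  subst hr
  rw [zero_smul, add_zero]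
  exact Submodule.mem_span_pair.2 ⟨p, q, rfl⟩



lemma span_range_fin2 (e : Fin 2 → V) :
    Submodule.span ℂ (Set.range e) = Submodule.span ℂ {e 0} ⊔ Submodule.span ℂ {e 1} := by
  rw [Submodule.span_range_eq_iSup]
  apply le_antisymm
  · apply iSup_le; intro i; fin_cases i
    · exact le_sup_left
    · exact le_sup_right
  · exact sup_le (le_iSup (fun i => Submodule.span ℂ {e i}) 0)
      (le_iSup (fun i => Submodule.span ℂ {e i}) 1)

lemma span_range_fin3 (g : Fin 3 → V) :
    Submodule.span ℂ (Set.range g)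
      = Submodule.span ℂ {g 0} ⊔ Submodule.span ℂ {g 1} ⊔ Submodule.span ℂ {g 2} := by
  rw [Submodule.span_range_eq_iSup]
  apply le_antisymm
  · apply iSup_le; intro i; fin_cases i
    · exact le_sup_of_le_left le_sup_left
    · exact le_sup_of_le_left le_sup_right
    · exact le_sup_right
  · exact sup_le (sup_le (le_iSup (fun i => Submodule.span ℂ {g i}) 0)
      (le_iSup (fun i => Submodule.span ℂ {g i}) 1)) (le_iSup (fun i => Submodule.span ℂ {g i}) 2)

lemma span_pair_eq_range (a b : V) :
    Submodule.span ℂ {a, b} = Submodule.span ℂ (Set.range ![a, b]) := by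
  congr 1
  ext z
  simp only [Set.mem_insert_iff, Set.mem_singleton_iff, Set.mem_range, Fin.exists_fin_two,
    Matrix.cons_val_zero, Matrix.cons_val_one, Matrix.head_cons]
  constructor
  · rintro (rfl | rfl)
    · exact Or.inl rfl
    · exact Or.inr rfl
  · rintro (h | h)
    · exact Or.inl h.symm
    · exact Or.inr h.symm

lemma span_pair_mul_mem {x d0 d1 w : V} {V₂ V₅ : Submodule ℂ V} (hx : x ∈ V₂)
    (h0 : d0 ∈ V₅) (h1 : d1 ∈ V₅) {β : ExteriorAlgebra ℂ V}
    (hβ : β ∈ Submodule.span ℂ {ι ℂ x * ι ℂ d0, ι ℂ x * ι ℂ d1}) :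
    β * ι ℂ w ∈ wSpan V₂ V₅ ⊤ := by
  have hle : Submodule.span ℂ {ι ℂ (M := V) x * ι ℂ d0, ι ℂ x * ι ℂ d1} ≤ sq2 V₂ V₅ := by
    rw [Submodule.span_le]
    rintro z hz
    rcases hz with hz | hz
    · rw [hz]; exact mem_sq2 hx h0
    · rw [Set.mem_singleton_iff.1 hz]; exact mem_sq2 hx h1
  exact sq2_mul_mem (hle hβ) Submodule.mem_top

end wSpanAux

open wSpanAux Submodule Module

set_option maxHeartbeats 3200000 in
theorem Y4_flags_exist (V₈ : Type*) [AddCommGroup V₈] [Module ℂ V₈]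
    (hdim : Module.finrank ℂ V₈ = 8)
    (U₄ U₆ : Submodule ℂ V₈) (h46 : U₄ ≤ U₆)
    (hU4 : Module.finrank ℂ U₄ = 4) (hU6 : Module.finrank ℂ U₆ = 6)
    (y : ExteriorAlgebra ℂ V₈) (hy : y ∈ wSpan U₄ U₄ ⊤ ⊔ wSpan U₆ U₆ U₆) :
    ∃ V₂ V₅ : Submodule ℂ V₈,
      Module.finrank ℂ V₂ = 2 ∧ Module.finrank ℂ V₅ = 5 ∧
      V₂ ≤ U₄ ∧ U₄ ≤ V₅ ∧ V₅ ≤ U₆ ∧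
      y ∈ wSpan V₅ V₅ V₅ ⊔ wSpan V₂ V₅ ⊤ := by
  classical
  haveI : FiniteDimensional ℂ V₈ := FiniteDimensional.of_finrank_eq_succ (n := 7) (by rw [hdim])
  -- complement of U₄ in U₆, spanned by e4, e5
  obtain ⟨Ec, hEU6, hsupE, hinfE, hrkE⟩ := exists_compl_in U₄ U₆ h46
  have hErk : Module.finrank ℂ Ec = 2 := by rw [hU4, hU6] at hrkE; omega
  obtain ⟨e, heE, heInd, heSpan⟩ := exists_fin_span Ec 2 hErk
  set e4 := e 0 with he4def
  set e5 := e 1 with he5def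
  -- complement of U₆ in ⊤, spanned by e6, e7
  obtain ⟨Cc, _, hsupCc, hinfCc, hrkCc⟩ := exists_compl_in U₆ ⊤ le_top
  have hCcrk : Module.finrank ℂ Cc = 2 := by
    rw [hU6, finrank_top, hdim] at hrkCc; omega
  obtain ⟨wv, hwCc, hwInd, hwSpan⟩ := exists_fin_span Cc 2 hCcrk
  set e6 := wv 0 with he6def
  set e7 := wv 1 with he7def
  have hU6eq : U₆ = U₄ ⊔ Submodule.span ℂ {e4} ⊔ Submodule.span ℂ {e5} := by
    rw [← hsupE, ← heSpan, span_range_fin2, ← sup_assoc]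
  -- stage 1: split y
  have key0 : wSpan U₆ U₆ U₆
      ≤ wSpan U₄ U₄ ⊤ ⊔ wSpan U₄ (Submodule.span ℂ {e4}) (Submodule.span ℂ {e5}) := by
    rw [hU6eq]
    refine wSpan_sup1_le (wSpan_sup1_le ?_ ?_) ?_
    all_goals refine wSpan_sup2_le (wSpan_sup2_le ?_ ?_) ?_
    all_goals refine wSpan_sup3_le (wSpan_sup3_le ?_ ?_) ?_
    all_goals first
      | (rw [wSpan_diag12]; exact bot_le)
      | (rw [wSpan_diag13]; exact bot_le)
      | (rw [wSpan_diag23]; exact bot_le)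
      | (exact le_sup_of_le_right le_rfl)
      | (exact le_sup_of_le_left (wSpan_mono le_rfl le_rfl le_top))
      | (rw [wSpan_comm23]; exact le_sup_of_le_right le_rfl)
      | (rw [wSpan_comm12]; exact le_sup_of_le_right le_rfl)
      | (rw [wSpan_comm13]; exact le_sup_of_le_right le_rfl)
      | (rw [wSpan_comm13, wSpan_comm23]; exact le_sup_of_le_right le_rfl)
      | (rw [wSpan_comm12, wSpan_comm23]; exact le_sup_of_le_right le_rfl)
      | (rw [wSpan_comm23]; exact le_sup_of_le_left (wSpan_mono le_rfl le_rfl le_top))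
      | (rw [wSpan_comm13]; exact le_sup_of_le_left (wSpan_mono le_rfl le_rfl le_top))
      | (rw [wSpan_comm12]; exact le_sup_of_le_left (wSpan_mono le_rfl le_rfl le_top))
  have hy' : y ∈ wSpan U₄ U₄ ⊤ ⊔ wSpan U₄ (Submodule.span ℂ {e4}) (Submodule.span ℂ {e5}) :=
    (sup_le le_sup_left key0) hy
  obtain ⟨a, ha, s, hs, rfl⟩ := Submodule.mem_sup.1 hy'
  obtain ⟨u, huU4, rfl⟩ := wSpan_singleton23 e4 e5 hs
  -- choose u' ≠ 0 with u ∈ span {u'}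
  have hU4ne : ∃ z, z ∈ U₄ ∧ z ≠ 0 := by
    by_contra h
    push_neg at h
    have : U₄ = ⊥ := (Submodule.eq_bot_iff _).2 h
    rw [this, finrank_bot] at hU4
    omega
  obtain ⟨z0, hz0U4, hz0⟩ := hU4ne
  obtain ⟨u', hu'U4, hu'0, huMem⟩ : ∃ u', u' ∈ U₄ ∧ u' ≠ 0 ∧ u ∈ Submodule.span ℂ {u'} := by
    by_cases h : u = 0
    · exact ⟨z0, hz0U4, hz0, by rw [h]; exact zero_mem _⟩
    · exact ⟨u, huU4, h, Submodule.mem_span_singleton_self u⟩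
  have hu'le : Submodule.span ℂ {u'} ≤ U₄ := by rwa [span_singleton_le_iff_mem]
  obtain ⟨C, hCU4, hsupC, hinfC, hrkC⟩ := exists_compl_in (Submodule.span ℂ {u'}) U₄ hu'le
  have hrkC3 : Module.finrank ℂ C = 3 := by
    rw [finrank_span_singleton hu'0, hU4] at hrkC; omega
  obtain ⟨g, hgC, hgInd, hgSpan⟩ := exists_fin_span C 3 hrkC3
  -- stage 2 split of a
  have key2 : wSpan U₄ U₄ ⊤ ≤ wSpan (Submodule.span ℂ {u'}) U₄ ⊤ ⊔ wSpan C C ⊤ := by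
    conv_lhs => rw [← hsupC]
    refine wSpan_sup1_le ?_ ?_
    · exact le_sup_of_le_left (wSpan_mono le_rfl hsupC.le le_rfl)
    · refine wSpan_sup2_le ?_ ?_
      · rw [wSpan_comm12]; exact le_sup_of_le_left (wSpan_mono le_rfl hCU4 le_rfl)
      · exact le_sup_right
  obtain ⟨a₁, ha₁, r, hr, rfl⟩ := Submodule.mem_sup.1 (key2 ha)
  -- stage 3 split of r in slot 3
  have hTop : (⊤ : Submodule ℂ V₈)
      = U₄ ⊔ Submodule.span ℂ {e4} ⊔ Submodule.span ℂ {e5}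
        ⊔ Submodule.span ℂ {e6} ⊔ Submodule.span ℂ {e7} := by
    refine le_antisymm ?_ le_top
    rw [← hsupCc]
    apply sup_le
    · rw [hU6eq]
      exact le_sup_of_le_left (le_sup_of_le_left le_rfl)
    · rw [← hwSpan, span_range_fin2]
      exact sup_le (le_sup_of_le_left le_sup_right) le_sup_right
  have key3 : wSpan C C ⊤ ≤ wSpan C C U₄ ⊔ wSpan C C (Submodule.span ℂ {e4})
      ⊔ wSpan C C (Submodule.span ℂ {e5}) ⊔ wSpan C C (Submodule.span ℂ {e6})
      ⊔ wSpan C C (Submodule.span ℂ {e7}) := by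
    conv_lhs => rw [hTop]
    refine wSpan_sup3_le (wSpan_sup3_le (wSpan_sup3_le (wSpan_sup3_le ?_ ?_) ?_) ?_) ?_
    exacts [le_sup_of_le_left (le_sup_of_le_left (le_sup_of_le_left le_sup_left)),
      le_sup_of_le_left (le_sup_of_le_left (le_sup_of_le_left le_sup_right)),
      le_sup_of_le_left (le_sup_of_le_left le_sup_right),
      le_sup_of_le_left le_sup_right, le_sup_right]
  obtain ⟨t1, ht1, r7, h7, rfl⟩ := Submodule.mem_sup.1 (key3 hr)
  obtain ⟨t2, ht2, r6, h6, rfl⟩ := Submodule.mem_sup.1 ht1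
  obtain ⟨t3, ht3, r5, h5, rfl⟩ := Submodule.mem_sup.1 ht2
  obtain ⟨r0, h0, r4, h4, rfl⟩ := Submodule.mem_sup.1 ht3
  obtain ⟨β4, hβ4, rfl⟩ := wSpan_singleton3 e4 h4
  obtain ⟨β5, hβ5, rfl⟩ := wSpan_singleton3 e5 h5
  obtain ⟨β6, hβ6, rfl⟩ := wSpan_singleton3 e6 h6
  obtain ⟨β7, hβ7, rfl⟩ := wSpan_singleton3 e7 h7
  -- the kernel element x
  have hgCspan : C = Submodule.span ℂ {g 0} ⊔ Submodule.span ℂ {g 1} ⊔ Submodule.span ℂ {g 2} := by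
    rw [← hgSpan, span_range_fin3]
  have hcube := cube_le (g 0) (g 1) (g 2) C hgCspan
  set T3 : ExteriorAlgebra ℂ V₈ := ι ℂ (g 0) * ι ℂ (g 1) * ι ℂ (g 2) with hT3
  set Q := Submodule.span ℂ {T3} with hQ
  have hmulQ : ∀ β ∈ sq2 C C, ∀ x ∈ C, β * ι ℂ x ∈ Q :=
    fun β hβ x hx => hcube (sq2_mul_mem hβ hx)
  haveI : FiniteDimensional ℂ Q := FiniteDimensional.span_of_finite ℂ (Set.finite_singleton _)
  let f6 : C →ₗ[ℂ] ExteriorAlgebra ℂ V₈ :=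
    (LinearMap.mulLeft ℂ β6).comp ((ExteriorAlgebra.ι ℂ (M := V₈)).comp C.subtype)
  let f7 : C →ₗ[ℂ] ExteriorAlgebra ℂ V₈ :=
    (LinearMap.mulLeft ℂ β7).comp ((ExteriorAlgebra.ι ℂ (M := V₈)).comp C.subtype)
  let F : C →ₗ[ℂ] Q × Q :=
    LinearMap.prod (f6.codRestrict Q (fun c => hmulQ β6 hβ6 c c.2))
      (f7.codRestrict Q (fun c => hmulQ β7 hβ7 c c.2))
  have hFker : ∃ x' : C, x' ≠ 0 ∧ F x' = 0 := by
    by_contra hcon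
    push_neg at hcon
    have hinj : Function.Injective F := by
      rw [← LinearMap.ker_eq_bot, Submodule.eq_bot_iff]
      intro c hc
      by_contra hne
      exact hcon c hne (LinearMap.mem_ker.1 hc)
    have hle := LinearMap.finrank_le_finrank_of_injective hinj
    have hQ1 : Module.finrank ℂ Q ≤ 1 := by
      by_cases hT : T3 = 0
      · rw [hQ, hT, Submodule.span_zero_singleton, finrank_bot]
        exact Nat.zero_le _
      · rw [hQ, finrank_span_singleton hT]
    rw [hrkC3, Module.finrank_prod] at hle
    omega
  obtain ⟨x', hx'0, hFx'⟩ := hFker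
  set x : V₈ := (x' : V₈) with hxdef
  have hxC : x ∈ C := x'.2
  have hx0 : x ≠ 0 := fun h => hx'0 (by exact_mod_cast Subtype.ext h)
  have h6x : β6 * ι ℂ x = 0 := by
    have h2 : (F x').1 = (0 : Q) := by rw [hFx']; rfl
    exact congrArg Subtype.val h2
  have h7x : β7 * ι ℂ x = 0 := by
    have h2 : (F x').2 = (0 : Q) := by rw [hFx']; rfl
    exact congrArg Subtype.val h2
  -- the coefficients l, m
  obtain ⟨p, hp⟩ := Submodule.mem_span_singleton.1 (hmulQ β4 hβ4 x hxC)
  obtain ⟨q, hq⟩ := Submodule.mem_span_singleton.1 (hmulQ β5 hβ5 x hxC)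
  obtain ⟨l, m, hlm0, hbal⟩ : ∃ l m : ℂ, ¬(l = 0 ∧ m = 0)
      ∧ m • (β4 * ι ℂ x) = l • (β5 * ι ℂ x) := by
    by_cases hpq : p = 0 ∧ q = 0
    · exact ⟨1, 0, by simp, by rw [← hp, ← hq, hpq.1, hpq.2]; simp⟩
    · refine ⟨p, q, hpq, ?_⟩
      rw [← hp, ← hq, smul_smul, smul_smul, mul_comm]
  set fv : V₈ := l • e4 + m • e5 with hfvdef
  -- complement of x in C
  have hxle : Submodule.span ℂ {x} ≤ C := by rwa [span_singleton_le_iff_mem]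
  obtain ⟨D, hDC, hsupD, hinfD, hrkD⟩ := exists_compl_in (Submodule.span ℂ {x}) C hxle
  have hrkD2 : Module.finrank ℂ D = 2 := by
    rw [finrank_span_singleton hx0, hrkC3] at hrkD; omega
  obtain ⟨d, hdD, hdInd, hdSpan⟩ := exists_fin_span D 2 hrkD2
  have hCspan2 : C = Submodule.span ℂ {x} ⊔ Submodule.span ℂ {d 0} ⊔ Submodule.span ℂ {d 1} := by
    rw [← hsupD, ← hdSpan, span_range_fin2, sup_assoc]
  have hindTriple : LinearIndependent ℂ ![x, d 0, d 1] := by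
    have hxD : x ∉ D := by
      intro hxD
      apply hx0
      have hz : x ∈ Submodule.span ℂ {x} ⊓ D := ⟨Submodule.mem_span_singleton_self x, hxD⟩
      rwa [hinfD, Submodule.mem_bot] at hz
    have hfc : ![x, d 0, d 1] = Fin.cons x d := by
      funext i; fin_cases i <;> rfl
    rw [hfc, linearIndependent_fin_cons]
    exact ⟨hdInd, by rwa [hdSpan]⟩
  have hdiv6 := divisible x (d 0) (d 1) C hCspan2 hindTriple hβ6 h6x
  have hdiv7 := divisible x (d 0) (d 1) C hCspan2 hindTriple hβ7 h7x
  -- the flag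
  set V₂ : Submodule ℂ V₈ := Submodule.span ℂ {u', x} with hV₂def
  set V₅ : Submodule ℂ V₈ := U₄ ⊔ Submodule.span ℂ {fv} with hV₅def
  -- basic membership facts
  have hfvE : fv ∈ Ec := add_mem (smul_mem _ _ (heE 0)) (smul_mem _ _ (heE 1))
  have hfvnotU4 : fv ∉ U₄ := by
    intro hmem
    have hz : fv ∈ U₄ ⊓ Ec := ⟨hmem, hfvE⟩
    rw [hinfE, Submodule.mem_bot] at hz
    have := Fintype.linearIndependent_iff.1 heInd ![l, m] (by
      rw [Fin.sum_univ_two]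
      simpa using hz)
    exact hlm0 ⟨this 0, this 1⟩
  have hfv0 : fv ≠ 0 := fun h => hfvnotU4 (h ▸ zero_mem U₄)
  have hu'V₂ : u' ∈ V₂ := Submodule.subset_span (by simp)
  have hxV₂ : x ∈ V₂ := Submodule.subset_span (by simp)
  have huV₂ : u ∈ V₂ := (Submodule.span_mono (by simp)) huMem
  have hU4V₅ : U₄ ≤ V₅ := le_sup_left
  have hCV₅ : C ≤ V₅ := hCU4.trans hU4V₅
  have hfvV₅ : fv ∈ V₅ := Submodule.mem_sup_right (Submodule.mem_span_singleton_self fv)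
  have hdV₅ : ∀ i, d i ∈ V₅ := fun i => hCV₅ (hDC (hdD i))
  have hV₂U₄ : V₂ ≤ U₄ := by
    rw [hV₂def, Submodule.span_le]
    rintro z hz
    rcases hz with hz | hz
    · rw [hz]; exact hu'U4
    · rw [Set.mem_singleton_iff.1 hz]; exact hCU4 hxC
  have hpair : LinearIndependent ℂ ![u', x] := by
    rw [LinearIndependent.pair_iff]
    intro sc tc hst
    have hu'C : u' ∉ C := by
      intro hmem
      apply hu'0
      have hz : u' ∈ Submodule.span ℂ {u'} ⊓ C := ⟨Submodule.mem_span_singleton_self u', hmem⟩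
      rwa [hinfC, Submodule.mem_bot] at hz
    by_cases hsc : sc = 0
    · subst hsc
      rw [zero_smul, zero_add] at hst
      rcases smul_eq_zero.1 hst with h | h
      · exact ⟨rfl, h⟩
      · exact absurd h hx0
    · exfalso
      apply hu'C
      have h1 : sc • u' = -(tc • x) := eq_neg_of_add_eq_zero_left hst
      have h2 : u' = sc⁻¹ • (-(tc • x)) := by
        rw [← h1, smul_smul, inv_mul_cancel₀ hsc, one_smul]
      rw [h2]
      exact smul_mem _ _ (neg_mem (smul_mem _ _ hxC))
  have hrkV₂ : Module.finrank ℂ V₂ = 2 := by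
    rw [hV₂def, span_pair_eq_range, finrank_span_eq_card hpair, Fintype.card_fin]
  have hinf5 : U₄ ⊓ Submodule.span ℂ {fv} = ⊥ := by
    rw [eq_bot_iff]
    rintro z hz
    rw [Submodule.mem_inf] at hz
    rcases Submodule.mem_span_singleton.1 hz.2 with ⟨c, rfl⟩
    by_cases hc : c = 0
    · rw [hc, zero_smul]; exact Submodule.zero_mem _
    · exfalso
      apply hfvnotU4
      have : fv = c⁻¹ • (c • fv) := by rw [smul_smul, inv_mul_cancel₀ hc, one_smul]
      rw [this]
      exact smul_mem _ _ hz.1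
  have hrkV₅ : Module.finrank ℂ V₅ = 5 := by
    have h5 := Submodule.finrank_sup_add_finrank_inf_eq U₄ (Submodule.span ℂ {fv})
    rw [hinf5, finrank_bot, hU4, finrank_span_singleton hfv0] at h5
    rw [hV₅def]
    omega
  have hV₅U₆ : V₅ ≤ U₆ := by
    rw [hV₅def]
    exact sup_le h46 (by rw [span_singleton_le_iff_mem]; exact hEU6 hfvE)
  -- membership pieces
  set TT := wSpan V₅ V₅ V₅ ⊔ wSpan V₂ V₅ ⊤ with hTTdef
  have m1 : a₁ ∈ TT :=
    Submodule.mem_sup_right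
      (wSpan_mono ((Submodule.span_singleton_le_iff_mem _ _).2 hu'V₂) hU4V₅ le_rfl ha₁)
  have m0 : r0 ∈ TT := Submodule.mem_sup_left (wSpan_mono hCV₅ hCV₅ hU4V₅ h0)
  have m6 : β6 * ι ℂ e6 ∈ TT :=
    Submodule.mem_sup_right (span_pair_mul_mem hxV₂ (hdV₅ 0) (hdV₅ 1) hdiv6)
  have m7 : β7 * ι ℂ e7 ∈ TT :=
    Submodule.mem_sup_right (span_pair_mul_mem hxV₂ (hdV₅ 0) (hdV₅ 1) hdiv7)
  have m45 : β4 * ι ℂ e4 + β5 * ι ℂ e5 ∈ TT := by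
    rcases not_and_or.1 hlm0 with hl | hm
    · -- l ≠ 0
      have hz5 : β5 * ι ℂ x = (l⁻¹ * m) • (β4 * ι ℂ x) := by
        have h1 : β5 * ι ℂ x = l⁻¹ • (l • (β5 * ι ℂ x)) := by
          rw [smul_smul, inv_mul_cancel₀ hl, one_smul]
        rw [h1, ← hbal, smul_smul]
      have hδsq : β5 - (l⁻¹ * m) • β4 ∈ sq2 C C := sub_mem hβ5 (smul_mem _ _ hβ4)
      have hδx : (β5 - (l⁻¹ * m) • β4) * ι ℂ x = 0 := by
        rw [sub_mul, smul_mul_assoc, ← hz5, sub_self]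
      have hdivδ := divisible x (d 0) (d 1) C hCspan2 hindTriple hδsq hδx
      have hid : β4 * ι ℂ e4 + β5 * ι ℂ e5
          = (l⁻¹ • β4) * ι ℂ fv + (β5 - (l⁻¹ * m) • β4) * ι ℂ e5 := by
        rw [hfvdef]
        simp only [map_add, map_smul, mul_add, sub_mul, smul_mul_assoc, mul_smul_comm,
          smul_add, smul_smul, mul_inv_cancel₀ hl, one_smul]
        module
      rw [hid]
      apply add_mem
      · exact Submodule.mem_sup_left
          (wSpan_mono hCV₅ hCV₅ le_rfl (sq2_mul_mem (smul_mem _ _ hβ4) hfvV₅))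
      · exact Submodule.mem_sup_right (span_pair_mul_mem hxV₂ (hdV₅ 0) (hdV₅ 1) hdivδ)
    · -- m ≠ 0
      have hz4 : β4 * ι ℂ x = (m⁻¹ * l) • (β5 * ι ℂ x) := by
        have h1 : β4 * ι ℂ x = m⁻¹ • (m • (β4 * ι ℂ x)) := by
          rw [smul_smul, inv_mul_cancel₀ hm, one_smul]
        rw [h1, hbal, smul_smul]
      have hδsq : β4 - (m⁻¹ * l) • β5 ∈ sq2 C C := sub_mem hβ4 (smul_mem _ _ hβ5)
      have hδx : (β4 - (m⁻¹ * l) • β5) * ι ℂ x = 0 := by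
        rw [sub_mul, smul_mul_assoc, ← hz4, sub_self]
      have hdivδ := divisible x (d 0) (d 1) C hCspan2 hindTriple hδsq hδx
      have hid : β4 * ι ℂ e4 + β5 * ι ℂ e5
          = (m⁻¹ • β5) * ι ℂ fv + (β4 - (m⁻¹ * l) • β5) * ι ℂ e4 := by
        rw [hfvdef]
        simp only [map_add, map_smul, mul_add, sub_mul, smul_mul_assoc, mul_smul_comm,
          smul_add, smul_smul, mul_inv_cancel₀ hm, one_smul]
        module
      rw [hid]
      apply add_mem
      · exact Submodule.mem_sup_left
          (wSpan_mono hCV₅ hCV₅ le_rfl (sq2_mul_mem (smul_mem _ _ hβ5) hfvV₅))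
      · exact Submodule.mem_sup_right (span_pair_mul_mem hxV₂ (hdV₅ 0) (hdV₅ 1) hdivδ)
  have mu : ι ℂ u * ι ℂ e4 * ι ℂ e5 ∈ TT := by
    rcases not_and_or.1 hlm0 with hl | hm
    · have hz : ι ℂ (M := V₈) u * ι ℂ e5 * ι ℂ e5 = 0 := by
        rw [mul_assoc, ι_sq_zero, mul_zero]
      have hflip : ι ℂ (M := V₈) u * ι ℂ fv * ι ℂ e5 = l • (ι ℂ u * ι ℂ e4 * ι ℂ e5) := by
        rw [hfvdef]
        simp only [map_add, map_smul, mul_add, add_mul, smul_mul_assoc, mul_smul_comm,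
          hz, smul_zero, add_zero]
      have heq : ι ℂ (M := V₈) u * ι ℂ e4 * ι ℂ e5 = l⁻¹ • (ι ℂ u * ι ℂ fv * ι ℂ e5) := by
        rw [hflip, smul_smul, inv_mul_cancel₀ hl, one_smul]
      rw [heq]
      exact Submodule.mem_sup_right
        (smul_mem _ _ (mem_wSpan huV₂ hfvV₅ Submodule.mem_top))
    · have hz4 : ι ℂ (M := V₈) u * ι ℂ e4 * ι ℂ e4 = 0 := by
        rw [mul_assoc, ι_sq_zero, mul_zero]
      have hsw : ι ℂ (M := V₈) u * ι ℂ e5 * ι ℂ e4 = -(ι ℂ u * ι ℂ e4 * ι ℂ e5) :=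
        sw23 u e5 e4
      have hflip : ι ℂ (M := V₈) u * ι ℂ fv * ι ℂ e4 = (-m) • (ι ℂ u * ι ℂ e4 * ι ℂ e5) := by
        rw [hfvdef]
        simp only [map_add, map_smul, mul_add, add_mul, smul_mul_assoc, mul_smul_comm,
          hz4, smul_zero, zero_add, hsw, smul_neg, neg_smul]
      have heq : ι ℂ (M := V₈) u * ι ℂ e4 * ι ℂ e5
          = (-m)⁻¹ • (ι ℂ u * ι ℂ fv * ι ℂ e4) := by
        rw [hflip, smul_smul, inv_mul_cancel₀ (neg_ne_zero.2 hm), one_smul]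
      rw [heq]
      exact Submodule.mem_sup_right
        (smul_mem _ _ (mem_wSpan huV₂ hfvV₅ Submodule.mem_top))
  refine ⟨V₂, V₅, hrkV₂, hrkV₅, hV₂U₄, hU4V₅, hV₅U₆, ?_⟩
  refine add_mem (add_mem m1 ?_) mu
  refine add_mem (add_mem ?_ m6) m7
  rw [add_assoc]
  exact add_mem m0 m45
end
end

section
/- Let V₈ be an 8-dimensional complex vector space, let U₄ ⊆ U₆ ⊆ V₈ be subspaces with dim U₄ = 4, dim U₆ = 6, and let y ∈ ⋀³V₈. Then y ∈ ⋀²U₄∧V₈ + ⋀³U₆ if and only if for every linear form η ∈ V₈* vanishing on U₆, the contraction ι_η y lies in the image of ⋀²U₄ in ⋀²V₈. -/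
open ExteriorAlgebra

noncomputable section

variable {V : Type*} [AddCommGroup V] [Module ℂ V]

/-- For a subspace `S` of a complex vector space `W`, the image of `⋀²S` in `⋀²W`, realized as
the span, inside the exterior algebra, of all products `s∧s'` with `s, s' ∈ S`. -/
def wSpan2 (S : Submodule ℂ V) : Submodule ℂ (ExteriorAlgebra ℂ V) :=
  Submodule.span ℂ {x | ∃ s ∈ S, ∃ t ∈ S, x = ι ℂ s * ι ℂ t}

/-! ### Auxiliary lemmas -/

lemma contract_triple (η : Module.Dual ℂ V) (s t u : V) :
    CliffordAlgebra.contractLeft η (ι ℂ s * ι ℂ t * ι ℂ u) =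
      η s • (ι ℂ t * ι ℂ u) - η t • (ι ℂ s * ι ℂ u) + η u • (ι ℂ s * ι ℂ t) := by
  rw [mul_assoc, CliffordAlgebra.contractLeft_ι_mul, CliffordAlgebra.contractLeft_ι_mul,
    CliffordAlgebra.contractLeft_ι, Algebra.algebraMap_eq_smul_one, mul_smul_comm, mul_one,
    mul_sub, mul_smul_comm, mul_smul_comm]
  abel

lemma fwd {S U : Submodule ℂ V} (hSU : S ≤ U) (η : Module.Dual ℂ V)
    (hη : U ≤ LinearMap.ker η) {z : ExteriorAlgebra ℂ V}
    (hz : z ∈ wSpan S S ⊤ ⊔ wSpan U U U) :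
    CliffordAlgebra.contractLeft η z ∈ wSpan2 S := by
  rw [wSpan, wSpan, ← Submodule.span_union] at hz
  induction hz using Submodule.span_induction with
  | mem x hx =>
    rcases hx with hx | hx
    · obtain ⟨s, hs, t, ht, u, -, rfl⟩ := hx
      rw [contract_triple]
      have hs0 : η s = 0 := hη (hSU hs)
      have ht0 : η t = 0 := hη (hSU ht)
      rw [hs0, ht0, zero_smul, zero_smul, sub_zero, zero_add]
      exact Submodule.smul_mem _ _ (Submodule.subset_span ⟨s, hs, t, ht, rfl⟩)
    · obtain ⟨s, hs, t, ht, u, hu, rfl⟩ := hx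
      rw [contract_triple, hη hs, hη ht, hη hu]
      simp
  | zero => simp
  | add x y _ _ hx hy => rw [map_add]; exact add_mem hx hy
  | smul c x _ hx => rw [map_smul]; exact Submodule.smul_mem _ _ hx

/-- Coefficient functional on the exterior algebra, extracting the coefficient of the wedge
of basis vectors indexed by `h`. -/
def coefN (n : ℕ) (b : Module.Basis (Fin 8) ℂ V) (h : Fin n → Fin 8) :
    ExteriorAlgebra ℂ V →ₗ[ℂ] ℂ :=
  liftAlternating (Function.update (0 : ∀ i : ℕ, V [⋀^Fin i]→ₗ[ℂ] ℂ) n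
    ((Matrix.detRowAlternating (n := Fin n) (R := ℂ)).compLinearMap
      (LinearMap.pi fun t => b.coord (h t))))

lemma coefN_eq_self (n : ℕ) (b : Module.Basis (Fin 8) ℂ V) (h : Fin n → Fin 8) (v : Fin n → V) :
    coefN n b h (ιMulti ℂ n v) = Matrix.det (Matrix.of fun i j => b.coord (h j) (v i)) := by
  rw [coefN, liftAlternating_apply_ιMulti, Function.update_self]
  rfl

lemma ιMulti_two (v : Fin 2 → V) : ιMulti ℂ 2 v = ι ℂ (v 0) * ι ℂ (v 1) := by
  rw [ιMulti_succ_apply, ιMulti_succ_apply, ιMulti_zero_apply, mul_one]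
  rfl

lemma ιMulti_three' (v : Fin 3 → V) : ιMulti ℂ 3 v = ι ℂ (v 0) * ι ℂ (v 1) * ι ℂ (v 2) := by
  rw [ιMulti_succ_apply, ιMulti_succ_apply, ιMulti_succ_apply, ιMulti_zero_apply, mul_one,
    mul_assoc]
  rfl

lemma ι_anticomm (x y : V) : ι ℂ x * ι ℂ y = -(ι ℂ y * ι ℂ x) :=
  eq_neg_of_add_eq_zero_left (ι_add_mul_swap x y)

lemma coef_delta {n : ℕ} (b : Module.Basis (Fin 8) ℂ V) (g h : Fin n → Fin 8)
    (hg : StrictMono g) (hh : StrictMono h) :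
    coefN n b h (ιMulti ℂ n fun t => b (g t)) = if g = h then 1 else 0 := by
  rw [coefN_eq_self]
  have hM : ∀ i j, (Matrix.of fun i j => b.coord (h j) (b (g i))) i j
      = if g i = h j then 1 else 0 := by
    intro i j
    simp [Module.Basis.coord_apply, Module.Basis.repr_self, Finsupp.single_apply]
  split_ifs with heq
  · subst heq
    have : (Matrix.of fun i j => b.coord (g j) (b (g i))) = 1 := by
      ext i j
      rw [hM, Matrix.one_apply]
      simp [hg.injective.eq_iff]
    rw [this, Matrix.det_one]
  · have : ∃ i, ∀ j, g i ≠ h j := by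
      by_contra hcon
      push_neg at hcon
      have hsub : Finset.image g Finset.univ ⊆ Finset.image h Finset.univ := by
        intro x hx
        simp only [Finset.mem_image, Finset.mem_univ, true_and] at hx ⊢
        obtain ⟨i, rfl⟩ := hx
        obtain ⟨j, hj⟩ := hcon i
        exact ⟨j, hj.symm⟩
      have hcard : (Finset.image h Finset.univ).card ≤ (Finset.image g Finset.univ).card := by
        rw [Finset.card_image_of_injective _ hg.injective,
          Finset.card_image_of_injective _ hh.injective]
      have := Finset.eq_of_subset_of_card_le hsub hcard
      have hr : Set.range g = Set.range h := by
        rw [← Set.image_univ, ← Set.image_univ, ← Finset.coe_univ, ← Finset.coe_image,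
          ← Finset.coe_image, this]
      exact heq (@Set.range_injOn_strictMono (Fin n) (Fin 8) _ _
        (inferInstance : WellFoundedLT (Fin n)) g hg h hh hr)
    obtain ⟨i, hi⟩ := this
    apply Matrix.det_eq_zero_of_row_eq_zero i
    intro j
    rw [hM, if_neg (hi j)]

lemma coord_span_zero (b : Module.Basis (Fin 8) ℂ V) {s : Set (Fin 8)} {k : Fin 8} (hk : k ∉ s)
    {x : V} (hx : x ∈ Submodule.span ℂ (b '' s)) : b.coord k x = 0 := by
  induction hx using Submodule.span_induction with
  | mem x hx =>
    obtain ⟨i, his, rfl⟩ := hx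
    have : i ≠ k := fun h => hk (h ▸ his)
    simp [Module.Basis.coord_apply, Module.Basis.repr_self, Finsupp.single_apply, this]
  | zero => simp
  | add x y _ _ hx hy => rw [map_add, hx, hy, add_zero]
  | smul c x _ hx => rw [map_smul, hx, smul_zero]

/-- Goodness predicate for index triples. -/
def good (g : Fin 3 → Fin 8) : Prop :=
  (∃ t₁ t₂ : Fin 3, t₁ ≠ t₂ ∧ (g t₁ : ℕ) < 4 ∧ (g t₂ : ℕ) < 4) ∨ ∀ t, (g t : ℕ) < 6

/-- Any element of `⋀³ V` is in the span of basis wedge cubes. -/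
lemma span_cube (b : Module.Basis (Fin 8) ℂ V) {y : ExteriorAlgebra ℂ V} (hy : y ∈ ⋀[ℂ]^3 V) :
    y ∈ Submodule.span ℂ
      (Set.range fun g : Fin 3 → Fin 8 => ιMulti ℂ 3 fun t => b (g t)) := by
  rw [← ιMulti_span_fixedDegree] at hy
  refine Submodule.span_le.2 ?_ hy
  rintro _ ⟨v, rfl⟩
  have hv : ιMulti ℂ 3 v = ιMulti ℂ 3 (fun t => ∑ j : Fin 8, b.repr (v t) j • b j) := by
    congr 1
    funext t
    exact (b.sum_repr (v t)).symm
  rw [hv]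
  have hexp := MultilinearMap.map_sum (ιMulti ℂ 3 : V [⋀^Fin 3]→ₗ[ℂ] _).toMultilinearMap
    (g := fun t j => b.repr (v t) j • b j)
  simp only [AlternatingMap.coe_multilinearMap] at hexp
  rw [hexp]
  apply Submodule.sum_mem
  intro p _
  have hsm := MultilinearMap.map_smul_univ
    (ιMulti ℂ 3 : V [⋀^Fin 3]→ₗ[ℂ] _).toMultilinearMap
    (fun t => b.repr (v t) (p t)) (fun t => b (p t))
  simp only [AlternatingMap.coe_multilinearMap] at hsm
  rw [hsm]
  exact Submodule.smul_mem _ _ (Submodule.subset_span ⟨p, rfl⟩)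

lemma good_mem (b : Module.Basis (Fin 8) ℂ V) (U₄ U₆ : Submodule ℂ V)
    (hb4 : ∀ i : Fin 8, (i : ℕ) < 4 → b i ∈ U₄) (hb6 : ∀ i : Fin 8, (i : ℕ) < 6 → b i ∈ U₆)
    {g : Fin 3 → Fin 8} (hg : good g) :
    (ιMulti ℂ 3 fun t => b (g t)) ∈ wSpan U₄ U₄ ⊤ ⊔ wSpan U₆ U₆ U₆ := by
  rw [ιMulti_three']
  rcases hg with ⟨t₁, t₂, hne, h1, h2⟩ | hall
  · apply Submodule.mem_sup_left
    have gen : ∀ s t u : V, s ∈ U₄ → t ∈ U₄ → ι ℂ s * ι ℂ t * ι ℂ u ∈ wSpan U₄ U₄ ⊤ :=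
      fun s t u hs ht => Submodule.subset_span ⟨s, hs, t, ht, u, trivial, rfl⟩
    fin_cases t₁ <;> fin_cases t₂
    · exact absurd rfl hne
    · exact gen _ _ _ (hb4 _ h1) (hb4 _ h2)
    · rw [mul_assoc, ι_anticomm (b (g 1)) (b (g 2)), mul_neg, ← mul_assoc]
      exact Submodule.neg_mem _ (gen _ _ _ (hb4 _ h1) (hb4 _ h2))
    · exact gen _ _ _ (hb4 _ h2) (hb4 _ h1)
    · exact absurd rfl hne
    · rw [ι_anticomm (b (g 0)) (b (g 1)), neg_mul, mul_assoc,
        ι_anticomm (b (g 0)) (b (g 2)), mul_neg, ← mul_assoc]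
      exact Submodule.neg_mem _ (Submodule.neg_mem _ (gen _ _ _ (hb4 _ h1) (hb4 _ h2)))
    · rw [mul_assoc, ι_anticomm (b (g 1)) (b (g 2)), mul_neg, ← mul_assoc]
      exact Submodule.neg_mem _ (gen _ _ _ (hb4 _ h2) (hb4 _ h1))
    · rw [ι_anticomm (b (g 0)) (b (g 1)), neg_mul, mul_assoc,
        ι_anticomm (b (g 0)) (b (g 2)), mul_neg, ← mul_assoc]
      exact Submodule.neg_mem _ (Submodule.neg_mem _ (gen _ _ _ (hb4 _ h2) (hb4 _ h1)))
    · exact absurd rfl hne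
  · apply Submodule.mem_sup_right
    exact Submodule.subset_span
      ⟨_, hb6 _ (hall 0), _, hb6 _ (hall 1), _, hb6 _ (hall 2), rfl⟩

lemma cube_le (b : Module.Basis (Fin 8) ℂ V) (U₄ U₆ : Submodule ℂ V)
    (hb4 : ∀ i : Fin 8, (i : ℕ) < 4 → b i ∈ U₄) (hb6 : ∀ i : Fin 8, (i : ℕ) < 6 → b i ∈ U₆) :
    Submodule.span ℂ (Set.range fun g : Fin 3 → Fin 8 => ιMulti ℂ 3 fun t => b (g t)) ≤
      (wSpan U₄ U₄ ⊤ ⊔ wSpan U₆ U₆ U₆) ⊔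
      Submodule.span ℂ (Set.range fun h : {h : Fin 3 → Fin 8 // StrictMono h ∧ ¬ good h} =>
        ιMulti ℂ 3 fun t => b (h.1 t)) := by
  rw [Submodule.span_le]
  rintro _ ⟨g, rfl⟩
  simp only [SetLike.mem_coe]
  by_cases hinj : Function.Injective g
  · set σ := Tuple.sort g with hσ
    set h := g ∘ σ with hh
    have hmono : StrictMono h :=
      (Tuple.monotone_sort g).strictMono_of_injective (hinj.comp σ.injective)
    have hgh : (fun t => b (g t)) = (fun t => b (h t)) ∘ ⇑σ⁻¹ := by
      funext t
      simp [hh, Function.comp]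
    have hperm : (ιMulti ℂ 3 fun t => b (g t)) =
        Equiv.Perm.sign σ⁻¹ • ιMulti ℂ 3 fun t => b (h t) := by
      rw [hgh]
      exact AlternatingMap.map_perm (ιMulti ℂ 3) (fun t => b (h t)) σ⁻¹
    rw [hperm]
    rcases Int.units_eq_one_or (Equiv.Perm.sign σ⁻¹) with hs | hs <;> rw [hs]
    · rw [one_smul]
      by_cases hgood : good h
      · exact Submodule.mem_sup_left (good_mem b U₄ U₆ hb4 hb6 hgood)
      · exact Submodule.mem_sup_right (Submodule.subset_span ⟨⟨h, hmono, hgood⟩, rfl⟩)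
    · rw [Units.neg_smul, one_smul]
      refine Submodule.neg_mem _ ?_
      by_cases hgood : good h
      · exact Submodule.mem_sup_left (good_mem b U₄ U₆ hb4 hb6 hgood)
      · exact Submodule.mem_sup_right (Submodule.subset_span ⟨⟨h, hmono, hgood⟩, rfl⟩)
  · have hni : ¬ Function.Injective fun t => b (g t) :=
      fun hc => hinj fun a a' hgf => hc (show b (g a) = b (g a') from congrArg b hgf)
    rw [AlternatingMap.map_eq_zero_of_not_injective _ _ hni]
    exact Submodule.zero_mem _

lemma coef2_wSpan2 (b : Module.Basis (Fin 8) ℂ V) (U₄ : Submodule ℂ V)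
    (hU4span : U₄ = Submodule.span ℂ (b '' {i : Fin 8 | (i : ℕ) < 4}))
    (pair : Fin 2 → Fin 8) (j : Fin 2) (hj : ¬((pair j : ℕ) < 4))
    {z : ExteriorAlgebra ℂ V} (hz : z ∈ wSpan2 U₄) : coefN 2 b pair z = 0 := by
  induction hz using Submodule.span_induction with
  | mem x hx =>
    obtain ⟨s, hs, t, ht, rfl⟩ := hx
    have h2 : ι ℂ s * ι ℂ t = ιMulti ℂ 2 ![s, t] := by
      rw [ιMulti_two]
      rfl
    rw [h2, coefN_eq_self]
    apply Matrix.det_eq_zero_of_column_eq_zero j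
    intro i
    simp only [Matrix.of_apply]
    refine coord_span_zero b (s := {i : Fin 8 | (i : ℕ) < 4}) hj ?_
    rw [← hU4span]
    fin_cases i
    · exact hs
    · exact ht
  | zero => simp
  | add x y _ _ hx hy => rw [map_add, hx, hy, add_zero]
  | smul c x _ hx => rw [map_smul, hx, smul_zero]

lemma range_split (f : Fin 3 → Fin 8) (t : Fin 3) :
    Set.range f = {f t} ∪ Set.range fun j => f (t.succAbove j) := by
  have h1 : (fun j => f (t.succAbove j)) = f ∘ t.succAbove := rfl
  rw [h1, Set.range_comp, Fin.range_succAbove, ← Set.image_singleton, ← Set.image_union,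
    Set.union_compl_self, Set.image_univ]

lemma eval_term (b : Module.Basis (Fin 8) ℂ V) (m : Fin 8) (pair : Fin 2 → Fin 8)
    (hpair : StrictMono pair) (g : Fin 3 → Fin 8) (hg : StrictMono g) :
    coefN 2 b pair (CliffordAlgebra.contractLeft (b.coord m) (ιMulti ℂ 3 fun t => b (g t))) =
      (if g 0 = m then (1:ℂ) else 0) *
        (if (fun j : Fin 2 => g ((0 : Fin 3).succAbove j)) = pair then 1 else 0)
      - (if g 1 = m then 1 else 0) *
        (if (fun j : Fin 2 => g ((1 : Fin 3).succAbove j)) = pair then 1 else 0)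
      + (if g 2 = m then 1 else 0) *
        (if (fun j : Fin 2 => g ((2 : Fin 3).succAbove j)) = pair then 1 else 0) := by
  have hcd : ∀ i : Fin 8, b.coord m (b i) = if i = m then 1 else 0 := by
    intro i
    simp [Module.Basis.coord_apply, Module.Basis.repr_self, Finsupp.single_apply]
  have hp : ∀ t : Fin 3,
      coefN 2 b pair (ι ℂ (b (g (t.succAbove 0))) * ι ℂ (b (g (t.succAbove 1)))) =
        if (fun j : Fin 2 => g (t.succAbove j)) = pair then 1 else 0 := by
    intro t
    have h2 : ι ℂ (b (g (t.succAbove 0))) * ι ℂ (b (g (t.succAbove 1))) =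
        ιMulti ℂ 2 fun j => b (g (t.succAbove j)) :=
      (ιMulti_two fun j => b (g (t.succAbove j))).symm
    rw [h2]
    exact coef_delta b (fun j => g (t.succAbove j)) pair
      (hg.comp (Fin.strictMono_succAbove t)) hpair
  have hp0 : coefN 2 b pair (ι ℂ (b (g 1)) * ι ℂ (b (g 2))) =
      if (fun j : Fin 2 => g ((0 : Fin 3).succAbove j)) = pair then 1 else 0 := by
    have := hp 0
    rwa [show (0 : Fin 3).succAbove 0 = 1 from by decide,
      show (0 : Fin 3).succAbove 1 = 2 from by decide] at this
  have hp1 : coefN 2 b pair (ι ℂ (b (g 0)) * ι ℂ (b (g 2))) =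
      if (fun j : Fin 2 => g ((1 : Fin 3).succAbove j)) = pair then 1 else 0 := by
    have := hp 1
    rwa [show (1 : Fin 3).succAbove 0 = 0 from by decide,
      show (1 : Fin 3).succAbove 1 = 2 from by decide] at this
  have hp2 : coefN 2 b pair (ι ℂ (b (g 0)) * ι ℂ (b (g 1))) =
      if (fun j : Fin 2 => g ((2 : Fin 3).succAbove j)) = pair then 1 else 0 := by
    have := hp 2
    rwa [show (2 : Fin 3).succAbove 0 = 0 from by decide,
      show (2 : Fin 3).succAbove 1 = 1 from by decide] at this
  rw [ιMulti_three', contract_triple, map_add, map_sub, map_smul, map_smul, map_smul,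
    hcd, hcd, hcd, hp0, hp1, hp2, smul_eq_mul, smul_eq_mul, smul_eq_mul]

lemma eval_diag (h : Fin 3 → Fin 8) (hmono : StrictMono h) (ts : Fin 3) :
    ((if h 0 = h ts then (1:ℂ) else 0) *
        (if (fun j : Fin 2 => h ((0 : Fin 3).succAbove j)) = (fun j => h (ts.succAbove j))
          then 1 else 0)
      - (if h 1 = h ts then 1 else 0) *
        (if (fun j : Fin 2 => h ((1 : Fin 3).succAbove j)) = (fun j => h (ts.succAbove j))
          then 1 else 0)
      + (if h 2 = h ts then 1 else 0) *
        (if (fun j : Fin 2 => h ((2 : Fin 3).succAbove j)) = (fun j => h (ts.succAbove j))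
          then 1 else 0)) = 1 ∨
    ((if h 0 = h ts then (1:ℂ) else 0) *
        (if (fun j : Fin 2 => h ((0 : Fin 3).succAbove j)) = (fun j => h (ts.succAbove j))
          then 1 else 0)
      - (if h 1 = h ts then 1 else 0) *
        (if (fun j : Fin 2 => h ((1 : Fin 3).succAbove j)) = (fun j => h (ts.succAbove j))
          then 1 else 0)
      + (if h 2 = h ts then 1 else 0) *
        (if (fun j : Fin 2 => h ((2 : Fin 3).succAbove j)) = (fun j => h (ts.succAbove j))
          then 1 else 0)) = -1 := by
  have inj := hmono.injective
  have hne : ∀ t t' : Fin 3, t ≠ t' → (if h t = h t' then (1:ℂ) else 0) = 0 := by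
    intro t t' ht
    rw [if_neg (fun e => ht (inj e))]
  have hcase : ts = 0 ∨ ts = 1 ∨ ts = 2 := by fin_cases ts <;> decide
  rcases hcase with rfl | rfl | rfl
  · left
    rw [hne 1 0 (by decide), hne 2 0 (by decide), if_pos rfl, if_pos rfl]
    ring
  · right
    rw [hne 0 1 (by decide), hne 2 1 (by decide), if_pos rfl, if_pos rfl]
    ring
  · left
    rw [hne 0 2 (by decide), hne 1 2 (by decide), if_pos rfl, if_pos rfl]
    ring

lemma basis_span_coe {V : Type*} [AddCommGroup V] [Module ℂ V] {P : Submodule ℂ V}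
    {ι : Type*} (bP : Module.Basis ι ℂ P) :
    P = Submodule.span ℂ (Set.range fun j => (bP j : V)) := by
  conv_lhs => rw [← Submodule.map_subtype_top P, ← bP.span_eq]
  rw [Submodule.map_span]
  congr 1
  rw [← Set.range_comp]
  rfl

lemma exists_adapted_basis (V₈ : Type*) [AddCommGroup V₈] [Module ℂ V₈]
    (hdim : Module.finrank ℂ V₈ = 8)
    (U₄ U₆ : Submodule ℂ V₈) (h46 : U₄ ≤ U₆)
    (hU4 : Module.finrank ℂ U₄ = 4) (hU6 : Module.finrank ℂ U₆ = 6) :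
    ∃ b : Module.Basis (Fin 8) ℂ V₈,
      U₄ = Submodule.span ℂ (b '' {i : Fin 8 | (i : ℕ) < 4}) ∧
      U₆ = Submodule.span ℂ (b '' {i : Fin 8 | (i : ℕ) < 6}) := by
  haveI : FiniteDimensional ℂ V₈ := FiniteDimensional.of_finrank_eq_succ (n := 7) (by omega)
  obtain ⟨W, hW⟩ := Submodule.exists_isCompl U₆
  set U₄' := U₄.comap U₆.subtype with hU₄'
  obtain ⟨T', hT'⟩ := Submodule.exists_isCompl U₄'
  set T := T'.map U₆.subtype with hT
  have hU4'fr : Module.finrank ℂ U₄' = 4 := by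
    rw [← hU4]
    exact (Submodule.comapSubtypeEquivOfLe h46).finrank_eq
  have hT'fr : Module.finrank ℂ T' = 2 := by
    have := Submodule.finrank_add_eq_of_isCompl hT'
    rw [hU4'fr, hU6] at this
    omega
  have hTfr : Module.finrank ℂ T = 2 := by
    rw [← hT'fr]
    exact (Submodule.equivMapOfInjective U₆.subtype U₆.injective_subtype T').symm.finrank_eq
  have hWfr : Module.finrank ℂ W = 2 := by
    have := Submodule.finrank_add_eq_of_isCompl hW
    rw [hU6, hdim] at this
    omega
  have hUT : U₄ ⊔ T = U₆ := by
    have h1 : Submodule.map U₆.subtype U₄' = U₄ := by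
      rw [hU₄', Submodule.map_comap_subtype, inf_eq_right.2 h46]
    calc U₄ ⊔ T = Submodule.map U₆.subtype (U₄' ⊔ T') := by rw [Submodule.map_sup, h1]
    _ = Submodule.map U₆.subtype ⊤ := by rw [hT'.sup_eq_top]
    _ = U₆ := Submodule.map_subtype_top U₆
  let b4 : Module.Basis (Fin 4) ℂ U₄ := Module.finBasisOfFinrankEq ℂ U₄ hU4
  let bT : Module.Basis (Fin 2) ℂ T := Module.finBasisOfFinrankEq ℂ T hTfr
  let bW : Module.Basis (Fin 2) ℂ W := Module.finBasisOfFinrankEq ℂ W hWfr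
  set e : Fin 8 → V₈ := fun i =>
    if h : (i : ℕ) < 4 then (b4 ⟨i, h⟩ : V₈)
    else if h6 : (i : ℕ) < 6 then (bT ⟨(i : ℕ) - 4, by omega⟩ : V₈)
    else (bW ⟨(i : ℕ) - 6, by omega⟩ : V₈) with he
  have he4 : e '' {i : Fin 8 | (i : ℕ) < 4} = Set.range fun j => (b4 j : V₈) := by
    ext x
    constructor
    · rintro ⟨i, hi, rfl⟩
      simp only [Set.mem_setOf_eq] at hi
      refine ⟨⟨i, hi⟩, ?_⟩
      simp only [he]
      rw [dif_pos hi]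
    · rintro ⟨j, rfl⟩
      refine ⟨⟨(j : ℕ), by omega⟩, j.2, ?_⟩
      simp only [he]
      rw [dif_pos (show ((⟨(j : ℕ), by omega⟩ : Fin 8) : ℕ) < 4 from j.2)]
  have heT : e '' {i : Fin 8 | 4 ≤ (i : ℕ) ∧ (i : ℕ) < 6} = Set.range fun j => (bT j : V₈) := by
    ext x
    constructor
    · rintro ⟨i, hi, rfl⟩
      simp only [Set.mem_setOf_eq] at hi
      refine ⟨⟨(i : ℕ) - 4, by omega⟩, ?_⟩
      simp only [he]
      rw [dif_neg (by omega), dif_pos (by omega)]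
    · rintro ⟨j, rfl⟩
      refine ⟨⟨(j : ℕ) + 4, by omega⟩, ⟨show 4 ≤ (j : ℕ) + 4 by omega,
        show (j : ℕ) + 4 < 6 by omega⟩, ?_⟩
      simp only [he]
      rw [dif_neg (show ¬((j : ℕ) + 4 < 4) by omega), dif_pos (show (j : ℕ) + 4 < 6 by omega)]
      congr 2
  have heW : e '' {i : Fin 8 | 6 ≤ (i : ℕ)} = Set.range fun j => (bW j : V₈) := by
    ext x
    constructor
    · rintro ⟨i, hi, rfl⟩
      simp only [Set.mem_setOf_eq] at hi
      refine ⟨⟨(i : ℕ) - 6, by omega⟩, ?_⟩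
      simp only [he]
      rw [dif_neg (by omega), dif_neg (by omega)]
    · rintro ⟨j, rfl⟩
      refine ⟨⟨(j : ℕ) + 6, by omega⟩, show 6 ≤ (j : ℕ) + 6 by omega, ?_⟩
      simp only [he]
      rw [dif_neg (show ¬((j : ℕ) + 6 < 4) by omega), dif_neg (show ¬((j : ℕ) + 6 < 6) by omega)]
      congr 2
  have hU4e : U₄ = Submodule.span ℂ (e '' {i : Fin 8 | (i : ℕ) < 4}) := by
    rw [he4]; exact basis_span_coe b4
  have hTe : T = Submodule.span ℂ (e '' {i : Fin 8 | 4 ≤ (i : ℕ) ∧ (i : ℕ) < 6}) := by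
    rw [heT]; exact basis_span_coe bT
  have hWe : W = Submodule.span ℂ (e '' {i : Fin 8 | 6 ≤ (i : ℕ)}) := by
    rw [heW]; exact basis_span_coe bW
  have hsets : ({i : Fin 8 | (i : ℕ) < 4} ∪ {i : Fin 8 | 4 ≤ (i : ℕ) ∧ (i : ℕ) < 6})
      = {i : Fin 8 | (i : ℕ) < 6} := by
    ext i
    simp only [Set.mem_union, Set.mem_setOf_eq]
    omega
  have hU6e : U₆ = Submodule.span ℂ (e '' {i : Fin 8 | (i : ℕ) < 6}) := by
    rw [← hUT, hU4e, hTe, ← Submodule.span_union, ← Set.image_union, hsets]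
  have hTop : ⊤ ≤ Submodule.span ℂ (Set.range e) := by
    rw [← hW.sup_eq_top, hU6e, hWe, ← Submodule.span_union, ← Set.image_union]
    refine Submodule.span_mono ?_
    rintro x ⟨i, -, rfl⟩
    exact ⟨i, rfl⟩
  let b : Module.Basis (Fin 8) ℂ V₈ := basisOfTopLeSpanOfCardEqFinrank e hTop (by simp [hdim])
  have hbe : ⇑b = e := coe_basisOfTopLeSpanOfCardEqFinrank e hTop (by simp [hdim])
  refine ⟨b, ?_, ?_⟩
  · rw [hbe]; exact hU4e
  · rw [hbe]; exact hU6e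

theorem mem_Y4_bundle_iff_contraction (V₈ : Type*) [AddCommGroup V₈] [Module ℂ V₈]
    (hdim : Module.finrank ℂ V₈ = 8)
    (U₄ U₆ : Submodule ℂ V₈) (h46 : U₄ ≤ U₆)
    (hU4 : Module.finrank ℂ U₄ = 4) (hU6 : Module.finrank ℂ U₆ = 6)
    (y : ExteriorAlgebra ℂ V₈) (hy : y ∈ ⋀[ℂ]^3 V₈) :
    y ∈ wSpan U₄ U₄ ⊤ ⊔ wSpan U₆ U₆ U₆ ↔
      ∀ η : Module.Dual ℂ V₈, U₆ ≤ LinearMap.ker η →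
        CliffordAlgebra.contractLeft η y ∈ wSpan2 U₄ := by
  classical
  obtain ⟨b, hU4span, hU6span⟩ := exists_adapted_basis V₈ hdim U₄ U₆ h46 hU4 hU6
  have hb4 : ∀ i : Fin 8, (i : ℕ) < 4 → b i ∈ U₄ :=
    fun i hi => hU4span ▸ Submodule.subset_span ⟨i, hi, rfl⟩
  have hb6 : ∀ i : Fin 8, (i : ℕ) < 6 → b i ∈ U₆ :=
    fun i hi => hU6span ▸ Submodule.subset_span ⟨i, hi, rfl⟩
  have hker : ∀ m : Fin 8, ¬((m : ℕ) < 6) → U₆ ≤ LinearMap.ker (b.coord m) := by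
    intro m hm x hx
    rw [LinearMap.mem_ker]
    exact coord_span_zero b hm (hU6span ▸ hx)
  constructor
  · intro hyB η hη
    exact fwd h46 η hη hyB
  · intro H
    have hmem := cube_le b U₄ U₆ hb4 hb6 (span_cube b hy)
    rw [Submodule.mem_sup] at hmem
    obtain ⟨yB, hyB, z, hz, hyz⟩ := hmem
    subst hyz
    refine Submodule.add_mem _ hyB ?_
    have Hz : ∀ m : Fin 8, ¬((m : ℕ) < 6) →
        CliffordAlgebra.contractLeft (b.coord m) z ∈ wSpan2 U₄ := by
      intro m hm
      have h1 := H (b.coord m) (hker m hm)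
      have h2 := fwd h46 (b.coord m) (hker m hm) hyB
      have h3 : CliffordAlgebra.contractLeft (b.coord m) z =
          CliffordAlgebra.contractLeft (b.coord m) (yB + z) -
          CliffordAlgebra.contractLeft (b.coord m) yB := by
        rw [map_add, add_sub_cancel_left]
      rw [h3]
      exact Submodule.sub_mem _ h1 h2
    rw [Submodule.mem_span_range_iff_exists_fun] at hz
    obtain ⟨c, hc⟩ := hz
    have hzero : ∀ h0 : {h : Fin 3 → Fin 8 // StrictMono h ∧ ¬ good h}, c h0 = 0 := by
      intro h0
      have hbad := h0.2.2
      rw [good] at hbad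
      push_neg at hbad
      obtain ⟨hbad1, ts, hts⟩ := hbad
      set m := h0.1 ts with hm
      set pair := fun j : Fin 2 => h0.1 (ts.succAbove j) with hpairdef
      have hpairmono : StrictMono pair := h0.2.1.comp (Fin.strictMono_succAbove ts)
      have hm6 : ¬((m : ℕ) < 6) := by omega
      have hpair4 : ∃ j : Fin 2, ¬((pair j : ℕ) < 4) := by
        by_contra hcon
        push_neg at hcon
        have h40 := hcon 0
        have h41 := hcon 1
        simp only [hpairdef] at h40 h41
        have hkey := hbad1 (ts.succAbove 0) (ts.succAbove 1)
          ((Fin.succAbove_right_injective (p := ts)).ne (by decide)) h40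
        omega
      obtain ⟨j, hj⟩ := hpair4
      have hμz : coefN 2 b pair (CliffordAlgebra.contractLeft (b.coord m) z) = 0 :=
        coef2_wSpan2 b U₄ hU4span pair j hj (Hz m hm6)
      have hsum : coefN 2 b pair (CliffordAlgebra.contractLeft (b.coord m) z) =
          ∑ g : {h : Fin 3 → Fin 8 // StrictMono h ∧ ¬ good h}, c g *
            coefN 2 b pair (CliffordAlgebra.contractLeft (b.coord m)
              (ιMulti ℂ 3 fun t => b (g.1 t))) := by
        conv_lhs => rw [← hc]
        rw [map_sum, map_sum]
        refine Finset.sum_congr rfl fun g _ => ?_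
        rw [map_smul, map_smul, smul_eq_mul]
      rw [hsum] at hμz
      have hterm0 : ∀ g : {h : Fin 3 → Fin 8 // StrictMono h ∧ ¬ good h},
          g ∈ Finset.univ → g ≠ h0 → c g *
          coefN 2 b pair (CliffordAlgebra.contractLeft (b.coord m)
            (ιMulti ℂ 3 fun t => b (g.1 t))) = 0 := by
        intro g _ hgne
        rw [eval_term b m pair hpairmono g.1 g.2.1]
        have key : ∀ t : Fin 3, g.1 t = m →
            (fun j : Fin 2 => g.1 (t.succAbove j)) = pair → False := by
          intro t h1 h2
          apply hgne
          apply Subtype.ext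
          have hr : Set.range g.1 = Set.range h0.1 := by
            rw [range_split g.1 t, range_split h0.1 ts, h1, h2, hm, hpairdef]
          exact @Set.range_injOn_strictMono (Fin 3) (Fin 8) _ _
            (inferInstance : WellFoundedLT (Fin 3)) g.1 g.2.1 h0.1 h0.2.1 hr
        have z0 : ∀ t : Fin 3, (if g.1 t = m then (1:ℂ) else 0) *
            (if (fun j : Fin 2 => g.1 (t.succAbove j)) = pair then 1 else 0) = 0 := by
          intro t
          by_cases h1 : g.1 t = m
          · by_cases h2 : (fun j : Fin 2 => g.1 (t.succAbove j)) = pair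
            · exact (key t h1 h2).elim
            · rw [if_neg h2, mul_zero]
          · rw [if_neg h1, zero_mul]
        rw [z0 0, z0 1, z0 2]
        ring
      rw [Finset.sum_eq_single h0 hterm0
        (fun habs => absurd (Finset.mem_univ h0) habs)] at hμz
      rw [eval_term b m pair hpairmono h0.1 h0.2.1] at hμz
      have hdiag := eval_diag h0.1 h0.2.1 ts
      rw [← hm, ← hpairdef] at hdiag
      rcases hdiag with hE | hE
      · rw [hE, mul_one] at hμz
        exact hμz
      · rw [hE, mul_neg_one, neg_eq_zero] at hμz
        exact hμz
    have hz0 : z = 0 := by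
      rw [← hc]
      exact Finset.sum_eq_zero fun g _ => by rw [hzero g, zero_smul]
    rw [hz0]
    exact Submodule.zero_mem _
end
end

section
/- Let L be a 4-dimensional complex vector space, let α ∈ ⋀²L, and let v₁ ∈ L be nonzero. Then there exist u, v, w ∈ L such that α = v₁∧u + v∧w. -/
open ExteriorAlgebra

noncomputable section

set_option linter.unreachableTactic false
set_option linter.unnecessarySeqFocus false
set_option linter.unusedTactic false

/-- Auxiliary: a spanning family of size 4 whose first member is `v₁`. -/
theorem exists_spanning_family (L : Type*) [AddCommGroup L] [Module ℂ L]
    (hdim : Module.finrank ℂ L = 4) (v₁ : L) (hv₁ : v₁ ≠ 0) :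
    ∃ e : Fin 4 → L, e 0 = v₁ ∧ ⊤ ≤ Submodule.span ℂ (Set.range e) := by
  have : FiniteDimensional ℂ L := FiniteDimensional.of_finrank_pos (by omega)
  obtain ⟨W, hW⟩ := Submodule.exists_isCompl (Submodule.span ℂ {v₁})
  have hWrank : Module.finrank ℂ W = 3 := by
    have := Submodule.finrank_add_eq_of_isCompl hW
    rw [finrank_span_singleton hv₁, hdim] at this
    omega
  let c : Module.Basis (Fin 3) ℂ W := (Module.finBasis ℂ W).reindex (finCongr hWrank)
  refine ⟨![v₁, c 0, c 1, c 2], rfl, ?_⟩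
  rw [← hW.sup_eq_top, sup_le_iff]
  constructor
  · rw [Submodule.span_le, Set.singleton_subset_iff]
    exact Submodule.subset_span ⟨0, rfl⟩
  · intro w hw
    have := Module.Basis.sum_repr c ⟨w, hw⟩
    have hcoe := congrArg (Subtype.val) this
    push_cast at hcoe
    rw [← hcoe]
    refine Submodule.sum_mem _ fun i _ => Submodule.smul_mem _ _ (Submodule.subset_span ?_)
    fin_cases i
    · exact ⟨1, rfl⟩
    · exact ⟨2, rfl⟩
    · exact ⟨3, rfl⟩

/-- Auxiliary: a degree-2 element is a combination of products of the `ι (e i)`. -/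
theorem exists_coeffs (L : Type*) [AddCommGroup L] [Module ℂ L]
    (α : ExteriorAlgebra ℂ L) (hα : α ∈ ⋀[ℂ]^2 L)
    (e : Fin 4 → L) (he : ⊤ ≤ Submodule.span ℂ (Set.range e)) :
    ∃ c : Fin 4 × Fin 4 → ℂ,
      ∑ p : Fin 4 × Fin 4, c p • (ι ℂ (e p.1) * ι ℂ (e p.2)) = α := by
  rw [← Submodule.mem_span_range_iff_exists_fun]
  rw [exteriorPower, pow_two] at hα
  refine Submodule.mul_induction_on hα ?_ ?_
  · rintro _ ⟨x, rfl⟩ _ ⟨y, rfl⟩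
    obtain ⟨f, hf⟩ := Submodule.mem_span_range_iff_exists_fun ℂ |>.mp (he (Submodule.mem_top (x := x)))
    obtain ⟨g, hg⟩ := Submodule.mem_span_range_iff_exists_fun ℂ |>.mp (he (Submodule.mem_top (x := y)))
    rw [← hf, ← hg, map_sum, map_sum, Finset.sum_mul_sum]
    refine Submodule.sum_mem _ fun i _ => Submodule.sum_mem _ fun j _ => ?_
    rw [map_smul, map_smul, smul_mul_smul_comm]
    exact Submodule.smul_mem _ _ (Submodule.subset_span ⟨(i, j), rfl⟩)
  · intro x y hx hy
    exact Submodule.add_mem _ hx hy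

/-- Auxiliary: the explicit decomposition given coefficients. -/
theorem decompose_of_coeffs (L : Type*) [AddCommGroup L] [Module ℂ L]
    (α : ExteriorAlgebra ℂ L)
    (e : Fin 4 → L) (c : Fin 4 × Fin 4 → ℂ)
    (hc : ∑ p : Fin 4 × Fin 4, c p • (ι ℂ (e p.1) * ι ℂ (e p.2)) = α) :
    ∃ u v w : L, α = ι ℂ (e 0) * ι ℂ u + ι ℂ v * ι ℂ w := by
  have hswap : ∀ i j : Fin 4, ι ℂ (e j) * ι ℂ (e i) = -(ι ℂ (e i) * ι ℂ (e j)) := fun i j =>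
    eq_neg_of_add_eq_zero_left (by rw [add_comm]; exact ι_add_mul_swap _ _)
  have hzero : ∀ i : Fin 4, ι ℂ (e i) * ι ℂ (e i) = 0 := fun i => ι_sq_zero _
  set p := c (1, 2) - c (2, 1) with hp
  set q := c (1, 3) - c (3, 1) with hq
  set r := c (2, 3) - c (3, 2) with hr
  set u : L := (c (0, 1) - c (1, 0)) • e 1 + (c (0, 2) - c (2, 0)) • e 2
      + (c (0, 3) - c (3, 0)) • e 3 with hu
  rw [← hc, Fintype.sum_prod_type]
  simp only [Fin.sum_univ_four]
  by_cases hp0 : p ≠ 0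
  · refine ⟨u, e 1 - (r / p) • e 3, p • e 2 + q • e 3, ?_⟩
    simp only [hu, map_add, map_sub, map_smul, mul_add, add_mul, mul_sub, sub_mul,
      smul_mul_assoc, mul_smul_comm, hswap 0 1, hswap 0 2, hswap 0 3, hswap 1 2, hswap 1 3,
      hswap 2 3, hzero]
    match_scalars <;> field_simp <;> ring
  · push_neg at hp0
    by_cases hq0 : q ≠ 0
    · refine ⟨u, e 1 + (r / q) • e 2, q • e 3, ?_⟩
      simp only [hu, map_add, map_sub, map_smul, mul_add, add_mul, mul_sub, sub_mul,
        smul_mul_assoc, mul_smul_comm, hswap 0 1, hswap 0 2, hswap 0 3, hswap 1 2, hswap 1 3,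
        hswap 2 3, hzero]
      have : c (1, 2) = c (2, 1) := by have := hp0; rw [hp, sub_eq_zero] at this; exact this
      match_scalars <;> field_simp <;> ring_nf <;> simp [this, hq, hr] <;> ring
    · push_neg at hq0
      refine ⟨u, r • e 2, e 3, ?_⟩
      simp only [hu, map_add, map_sub, map_smul, mul_add, add_mul, mul_sub, sub_mul,
        smul_mul_assoc, mul_smul_comm, hswap 0 1, hswap 0 2, hswap 0 3, hswap 1 2, hswap 1 3,
        hswap 2 3, hzero]
      have h1 : c (1, 2) = c (2, 1) := by rw [hp, sub_eq_zero] at hp0; exact hp0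
      have h2 : c (1, 3) = c (3, 1) := by rw [hq, sub_eq_zero] at hq0; exact hq0
      match_scalars <;> simp [h1, h2] <;> ring

theorem pencil_meets_decomposables (L : Type*) [AddCommGroup L] [Module ℂ L]
    (hdim : Module.finrank ℂ L = 4)
    (α : ExteriorAlgebra ℂ L) (hα : α ∈ ⋀[ℂ]^2 L)
    (v₁ : L) (hv₁ : v₁ ≠ 0) :
    ∃ u v w : L, α = ι ℂ v₁ * ι ℂ u + ι ℂ v * ι ℂ w := by
  obtain ⟨e, he0, he⟩ := exists_spanning_family L hdim v₁ hv₁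
  obtain ⟨c, hc⟩ := exists_coeffs L α hα e he
  obtain ⟨u, v, w, h⟩ := decompose_of_coeffs L α e c hc
  exact ⟨u, v, w, he0 ▸ h⟩
end
end

section
/- Let R = ℂ[x₁, y₁, x₂, y₂, x₃, y₃] be the polynomial ring in six variables, with the symmetric group S₃ acting by ℂ-algebra automorphisms permuting the indices (sending xᵢ ↦ x_{σ(i)} and yᵢ ↦ y_{σ(i)} simultaneously). Let I = (x₁ − x₂, y₁ − y₂) and let q : R → R/I be the quotient map. Then the class q(x₃) does not belong to the image q(R^{S₃}) of the invariant subalgebra R^{S₃}. -/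
open MvPolynomial

noncomputable section

/-- The polynomial ring `R = ℂ[x₁,y₁,x₂,y₂,x₃,y₃]`: the variable `(i, 0)` is `x_{i+1}` and
the variable `(i, 1)` is `y_{i+1}`. -/
abbrev R : Type := MvPolynomial (Fin 3 × Fin 2) ℂ

/-- The action of `σ ∈ S₃` on `R`, permuting the `x`'s and the `y`'s simultaneously. -/
def permAct (σ : Equiv.Perm (Fin 3)) (p : R) : R :=
  MvPolynomial.rename (fun q => (σ q.1, q.2)) p

/-- `p ∈ R^{S₃}`: `p` is invariant under the simultaneous `S₃`-action. -/
def IsS3Invariant (p : R) : Prop := ∀ σ : Equiv.Perm (Fin 3), permAct σ p = p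

/-- The ideal `I = (x₁ − x₂, y₁ − y₂)`. -/
def I : Ideal R :=
  Ideal.span {X (0, 0) - X (1, 0), X (0, 1) - X (1, 1)}

lemma coeff_single_mul_sub (i j k : Fin 3 × Fin 2) (a : R) (hij : i ≠ j) (hik : i ≠ k) :
    coeff (Finsupp.single i 1) (a * (X j - X k)) = 0 := by
  classical
  rw [mul_sub, coeff_sub, coeff_mul_X', coeff_mul_X']
  rw [if_neg, if_neg, sub_zero]
  · simp [Finsupp.single_apply, hik, Ne.symm hik]
  · simp [Finsupp.single_apply, hij, Ne.symm hij]

lemma coeff_single_mul_sub_left (j k : Fin 3 × Fin 2) (a : R) (hjk : j ≠ k) :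
    coeff (Finsupp.single j 1) (a * (X j - X k)) = coeff 0 a := by
  classical
  rw [mul_sub, coeff_sub, coeff_mul_X', coeff_mul_X']
  rw [if_pos (by simp), if_neg (by simp [Finsupp.single_apply, hjk, Ne.symm hjk]), sub_zero,
    show (Finsupp.single j (1:ℕ)) - Finsupp.single j 1 = 0 from tsub_self _]

lemma coeff_single_mul_sub_right (j k : Fin 3 × Fin 2) (a : R) (hjk : j ≠ k) :
    coeff (Finsupp.single k 1) (a * (X j - X k)) = - coeff 0 a := by
  classical
  rw [mul_sub, coeff_sub, coeff_mul_X', coeff_mul_X']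
  rw [if_neg (by simp [Finsupp.single_apply, hjk, Ne.symm hjk]), if_pos (by simp), zero_sub,
    show (Finsupp.single k (1:ℕ)) - Finsupp.single k 1 = 0 from tsub_self _]

theorem x3_not_in_image_of_invariants :
    ¬ ∃ p : R, IsS3Invariant p ∧ Ideal.Quotient.mk I p = Ideal.Quotient.mk I (X (2, 0)) := by
  classical
  rintro ⟨p, hinv, hq⟩
  rw [Ideal.Quotient.eq, I, Ideal.mem_span_pair] at hq
  obtain ⟨a, b, hab⟩ := hq
  have hp : p = a * (X (0,0) - X (1,0)) + b * (X (0,1) - X (1,1)) + X (2, 0) := by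
    linear_combination -hab
  -- coefficient extraction
  set c : Fin 3 × Fin 2 → ℂ := fun i => coeff (Finsupp.single i 1) p with hc
  have hperm : ∀ σ : Equiv.Perm (Fin 3), ∀ i : Fin 3, c (σ i, 0) = c (i, 0) := by
    intro σ i
    have h1 := hinv σ
    have h2 := coeff_rename_mapDomain (fun q : Fin 3 × Fin 2 => (σ q.1, q.2))
      (fun q q' h => by
        simp only [Prod.mk.injEq] at h
        exact Prod.ext (σ.injective h.1) h.2) p (Finsupp.single (i, 0) 1)
    rw [permAct] at h1
    rw [h1, Finsupp.mapDomain_single] at h2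
    exact h2
  have h20 : c (2, 0) = 1 := by
    rw [hc]; simp only [hp, coeff_add]
    rw [coeff_single_mul_sub _ _ _ a (by decide) (by decide),
      coeff_single_mul_sub _ _ _ b (by decide) (by decide), coeff_X]
    simp
  have h00 : c (0, 0) = coeff 0 a := by
    rw [hc]; simp only [hp, coeff_add]
    rw [coeff_single_mul_sub_left _ _ a (by decide),
      coeff_single_mul_sub _ _ _ b (by decide) (by decide),
      coeff_X' (R := ℂ), if_neg (by
        intro h
        have := Finsupp.single_left_injective (α := Fin 3 × Fin 2) (one_ne_zero) h
        exact absurd this (by decide))]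
    ring
  have h10 : c (1, 0) = - coeff 0 a := by
    rw [hc]; simp only [hp, coeff_add]
    rw [coeff_single_mul_sub_right _ _ a (by decide),
      coeff_single_mul_sub _ _ _ b (by decide) (by decide),
      coeff_X' (R := ℂ), if_neg (by
        intro h
        have := Finsupp.single_left_injective (α := Fin 3 × Fin 2) (one_ne_zero) h
        exact absurd this (by decide))]
    ring
  have e1 : c (0, 0) = c (2, 0) := by
    have := hperm (Equiv.swap 0 2) 2
    simpa using this
  have e2 : c (1, 0) = c (2, 0) := by
    have := hperm (Equiv.swap 1 2) 2
    simpa using this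
  rw [h00, h20] at e1
  rw [h10, h20, e1] at e2
  norm_num at e2
end
end
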